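/- arXiv:1707.04981 — 3 statements merged into one kernel-verified Lean document; each statement's English description precedes it below -/
import Mathlib

section
/- In the binomial model, every equilibrium is a lower interval strictly below K: if S ∈ ℰ, then there exists y ∈ 𝕏 with 0 < y < K such that S = (0,y] ∩ 𝕏 = {x ∈ 𝕏 : x ≤ y}. -/
open MeasureTheory ProbabilityTheory Set Filter Topology
open scoped ENNReal ENat

noncomputable section

/-- The σ-algebra generated by the first `n+1` coordinates of the path space:
the natural filtration of the coordinate process at time `n`. -/
def pathSigma (𝕏 : Type*) [m : MeasurableSpace 𝕏] (n : ℕ) : MeasurableSpace (ℕ → 𝕏) :=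
  ⨆ i ∈ Finset.range (n + 1), MeasurableSpace.comap (fun ω : ℕ → 𝕏 => ω i) m

/-- `Pr` is the family of laws of the time-homogeneous Markov chain with one-step
transition kernel `Q`: under `Pr x` the chain starts at `x`, and the Markov property
`Pr^x(X_{n+1} ∈ A | 𝓕_n) = Q(X_n, A)` holds. -/
structure IsMarkovChainLaw {𝕏 : Type*} [MeasurableSpace 𝕏]
    (Pr : Kernel 𝕏 (ℕ → 𝕏)) (Q : Kernel 𝕏 𝕏) : Prop where
  start : ∀ x : 𝕏, Pr x {ω | ω 0 = x} = 1
  markov : ∀ (x : 𝕏) (n : ℕ) (B : Set (ℕ → 𝕏)), MeasurableSet[pathSigma 𝕏 n] B →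
    ∀ A : Set 𝕏, MeasurableSet A →
      Pr x (B ∩ {ω | ω (n + 1) ∈ A}) = ∫⁻ ω in B, Q (ω n) A ∂(Pr x)

/-- The first hitting time `ρ(x,S) = inf {t ≥ 1 : X_t ∈ S}` along the path `ω`
(equal to `⊤` if `S` is never reached at a time `≥ 1`). -/
def hitTime {𝕏 : Type*} (S : Set 𝕏) (ω : ℕ → 𝕏) : ℕ∞ :=
  sInf {n : ℕ∞ | ∃ t : ℕ, n = (t : ℕ∞) ∧ 1 ≤ t ∧ ω t ∈ S}

/-- The discounted payoff `δ(ρ(x,S)) f(X_{ρ(x,S)})` collected along the path `ω`,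
with the convention that it vanishes when `S` is never hit. -/
def stopPayoff {𝕏 : Type*} (δ : ℕ → ℝ) (f : 𝕏 → ℝ) (S : Set 𝕏) (ω : ℕ → 𝕏) : ℝ :=
  if hitTime S ω = ⊤ then 0
  else δ (hitTime S ω).toNat * f (ω (hitTime S ω).toNat)

/-- The objective value `J(x, ρ(x,S)) = 𝔼^x[δ(ρ(x,S)) f(X_{ρ(x,S)})]`. -/
def valJ {𝕏 : Type*} [MeasurableSpace 𝕏] (Pr : Kernel 𝕏 (ℕ → 𝕏)) (δ : ℕ → ℝ) (f : 𝕏 → ℝ)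
    (S : Set 𝕏) (x : 𝕏) : ℝ :=
  ∫ ω, stopPayoff δ f S ω ∂(Pr x)

/-- The operator `Θ(S) = {x ∈ 𝕏 : f(x) ≥ J(x, ρ(x,S))}`. -/
def Θ {𝕏 : Type*} [MeasurableSpace 𝕏] (Pr : Kernel 𝕏 (ℕ → 𝕏)) (δ : ℕ → ℝ) (f : 𝕏 → ℝ)
    (S : Set 𝕏) : Set 𝕏 :=
  {x | valJ Pr δ f S x ≤ f x}

/-- A Borel set `S ⊆ 𝕏` is an equilibrium if `Θ(S) = S`. -/
def IsEquilibrium {𝕏 : Type*} [MeasurableSpace 𝕏] (Pr : Kernel 𝕏 (ℕ → 𝕏)) (δ : ℕ → ℝ)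
    (f : 𝕏 → ℝ) (S : Set 𝕏) : Prop :=
  MeasurableSet S ∧ Θ Pr δ f S = S

/-- The value `V(x,S) = max (f x) (J(x, ρ(x,S)))` associated with an equilibrium `S`. -/
def valV {𝕏 : Type*} [MeasurableSpace 𝕏] (Pr : Kernel 𝕏 (ℕ → 𝕏)) (δ : ℕ → ℝ) (f : 𝕏 → ℝ)
    (S : Set 𝕏) (x : 𝕏) : ℝ :=
  max (f x) (valJ Pr δ f S x)

/-- The state space `𝕏 = {uⁱ : i ∈ ℤ}` of the binomial model. -/
def binGrid (u : ℝ) : Set ℝ := {x | ∃ i : ℤ, x = u ^ i}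

/-- The hyperbolic discount function `δ(t) = 1 / (1 + βt)`. -/
def binDisc (β : ℝ) (t : ℕ) : ℝ := 1 / (1 + β * t)

/-- The payoff function `f(x) = max (K − x) 0`. -/
def binPay (K : ℝ) (x : ℝ) : ℝ := max (K - x) 0

/-- The operator `Θ(S) = {x ∈ 𝕏 : f(x) ≥ J(x, ρ(x,S))}` of the binomial model. -/
def ΘBin (Pr : Kernel ℝ (ℕ → ℝ)) (u β K : ℝ) (S : Set ℝ) : Set ℝ :=
  {x | x ∈ binGrid u ∧ valJ Pr (binDisc β) (binPay K) S x ≤ binPay K x}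


namespace BEq
attribute [local instance] Classical.propDecidable

variable {u : ℝ}

lemma grid_mem (i : ℤ) : (u:ℝ) ^ i ∈ binGrid u := ⟨i, _root_.rfl⟩

lemma grid_pos (hu : 1 < u) {x : ℝ} (hx : x ∈ binGrid u) : 0 < x := by
  obtain ⟨i, rfl⟩ := hx; exact zpow_pos (by linarith) i

lemma grid_mul (hu : 1 < u) {x : ℝ} (hx : x ∈ binGrid u) : u * x ∈ binGrid u := by
  obtain ⟨i, rfl⟩ := hx
  exact ⟨i + 1, by rw [zpow_add_one₀ (by positivity : (u:ℝ) ≠ 0)]; ring⟩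

lemma grid_div (hu : 1 < u) {x : ℝ} (hx : x ∈ binGrid u) : x / u ∈ binGrid u := by
  obtain ⟨i, rfl⟩ := hx
  exact ⟨i - 1, by rw [zpow_sub_one₀ (by positivity : (u:ℝ) ≠ 0)]; ring⟩

lemma grid_strictMono (hu : 1 < u) : StrictMono (fun i : ℤ => (u:ℝ) ^ i) :=
  fun _ _ h => zpow_lt_zpow_right₀ hu h

lemma grid_gap (hu : 1 < u) {x y : ℝ} (hx : x ∈ binGrid u) (hy : y ∈ binGrid u)
    (hxy : x < y) : u * x ≤ y := by
  obtain ⟨i, rfl⟩ := hx; obtain ⟨j, rfl⟩ := hy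
  have hij : i < j := (grid_strictMono hu).lt_iff_lt.mp hxy
  calc u * u ^ i = u ^ (i + 1) := by
        rw [zpow_add_one₀ (by positivity : (u:ℝ) ≠ 0)]; ring
    _ ≤ u ^ j := zpow_le_zpow_right₀ hu.le (by omega)

lemma grid_le_div (hu : 1 < u) {x y : ℝ} (hx : x ∈ binGrid u) (hy : y ∈ binGrid u)
    (hxy : x < y) : x ≤ y / u :=
  (le_div_iff₀ (by linarith)).2 (by rw [mul_comm] at *; exact grid_gap hu hx hy hxy)

lemma grid_exists_lt (hu : 1 < u) {K : ℝ} (hK : 0 < K) : ∃ i : ℤ, (u:ℝ) ^ i < K := by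
  obtain ⟨n, hn⟩ := pow_unbounded_of_one_lt (1 / K) hu
  refine ⟨-n, ?_⟩
  rw [zpow_neg, zpow_natCast]
  rw [div_lt_iff₀ hK] at hn
  have : 0 < (u:ℝ) ^ n := by positivity
  rw [inv_lt_iff_one_lt_mul₀ this]
  nlinarith

lemma grid_exists_gt (hu : 1 < u) (C : ℝ) : ∃ n : ℕ, C < (u:ℝ) ^ (n : ℤ) := by
  obtain ⟨n, hn⟩ := pow_unbounded_of_one_lt C hu
  exact ⟨n, by rwa [zpow_natCast]⟩

lemma grid_countable : (binGrid u).Countable := Set.countable_range (fun i : ℤ => (u:ℝ) ^ i) |>.mono (by intro x ⟨i,h⟩; exact ⟨i, h.symm⟩)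

lemma grid_measurable : MeasurableSet (binGrid u) := grid_countable.measurableSet

-- hitTime lemmas
variable {𝕏 : Type*} {S : Set 𝕏} {ω : ℕ → 𝕏}

lemma hitTime_eq_find (h : ∃ t, 1 ≤ t ∧ ω t ∈ S) :
    hitTime S ω = (Nat.find h : ℕ∞) := by
  apply le_antisymm
  · exact sInf_le ⟨Nat.find h, _root_.rfl, (Nat.find_spec h).1, (Nat.find_spec h).2⟩
  · refine le_sInf ?_
    rintro n ⟨t, rfl, ht, hts⟩
    exact_mod_cast Nat.find_min' h ⟨ht, hts⟩

lemma hitTime_eq_top (h : ¬ ∃ t, 1 ≤ t ∧ ω t ∈ S) : hitTime S ω = ⊤ := by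
  rw [hitTime]
  refine (congrArg sInf (?_ : _ = (∅ : Set ℕ∞))).trans sInf_empty
  ext n
  simp only [mem_setOf_eq, mem_empty_iff_false, iff_false]
  rintro ⟨t, rfl, ht, hts⟩; exact h ⟨t, ht, hts⟩

lemma hitTime_eq_coe_iff {m : ℕ} :
    hitTime S ω = (m : ℕ∞) ↔ (1 ≤ m ∧ ω m ∈ S ∧ ∀ t, 1 ≤ t → t < m → ω t ∉ S) := by
  constructor
  · intro h
    by_cases he : ∃ t, 1 ≤ t ∧ ω t ∈ S
    · rw [hitTime_eq_find he] at h
      have hm : Nat.find he = m := by exact_mod_cast h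
      obtain ⟨h1, h2⟩ := Nat.find_spec he
      rw [hm] at h1 h2
      refine ⟨h1, h2, fun t ht htm hts => ?_⟩
      have := Nat.find_min' he ⟨ht, hts⟩
      omega
    · rw [hitTime_eq_top he] at h; exact absurd h.symm (by simp)
  · rintro ⟨h1, h2, h3⟩
    have he : ∃ t, 1 ≤ t ∧ ω t ∈ S := ⟨m, h1, h2⟩
    rw [hitTime_eq_find he]
    norm_cast
    rw [Nat.find_eq_iff]
    exact ⟨⟨h1, h2⟩, fun t htm ⟨ht, hts⟩ => h3 t ht htm hts⟩

lemma hitTime_le_coe_iff {n : ℕ} :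
    hitTime S ω ≤ (n : ℕ∞) ↔ ∃ t, 1 ≤ t ∧ t ≤ n ∧ ω t ∈ S := by
  constructor
  · intro h
    by_cases he : ∃ t, 1 ≤ t ∧ ω t ∈ S
    · rw [hitTime_eq_find he] at h
      have : Nat.find he ≤ n := by exact_mod_cast h
      exact ⟨Nat.find he, (Nat.find_spec he).1, this, (Nat.find_spec he).2⟩
    · rw [hitTime_eq_top he] at h; exact absurd h (by simp)
  · rintro ⟨t, ht1, htn, hts⟩
    calc hitTime S ω ≤ (t : ℕ∞) := sInf_le ⟨t, _root_.rfl, ht1, hts⟩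
      _ ≤ (n : ℕ∞) := by exact_mod_cast htn

lemma hitTime_ne_zero : hitTime S ω ≠ (0 : ℕ∞) := by
  intro h
  rw [(by norm_cast : ((0:ℕ∞)) = ((0:ℕ):ℕ∞)), hitTime_eq_coe_iff] at h
  omega

lemma hitTime_eq_top_iff :
    hitTime S ω = ⊤ ↔ ∀ t : ℕ, 1 ≤ t → ω t ∉ S := by
  constructor
  · intro h t ht hts
    have : hitTime S ω ≤ (t:ℕ∞) := sInf_le ⟨t, _root_.rfl, ht, hts⟩
    rw [h] at this
    exact absurd (top_le_iff.mp this).symm (by simp)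
  · intro h
    exact hitTime_eq_top (by push_neg; exact fun t ht => h t ht)

lemma hitTime_not_le_iff {n : ℕ} :
    ¬ (hitTime S ω ≤ (n : ℕ∞)) ↔ ∀ t, 1 ≤ t → t ≤ n → ω t ∉ S := by
  rw [hitTime_le_coe_iff]; push_neg; tauto


lemma pathSigma_le (n : ℕ) : pathSigma ℝ n ≤ (inferInstance : MeasurableSpace (ℕ → ℝ)) := by
  apply iSup₂_le
  intro i _
  exact (measurable_pi_apply i).comap_le

lemma measurableSet_coord_path {S : Set ℝ} (hS : MeasurableSet S) {t n : ℕ} (ht : t ≤ n) :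
    MeasurableSet[pathSigma ℝ n] {ω : ℕ → ℝ | ω t ∈ S} := by
  have h1 : MeasurableSpace.comap (fun ω : ℕ → ℝ => ω t) inferInstance ≤ pathSigma ℝ n :=
    le_iSup₂ (f := fun (i : ℕ) (_ : i ∈ Finset.range (n+1)) =>
      MeasurableSpace.comap (fun ω : ℕ → ℝ => ω i) inferInstance) t
      (Finset.mem_range.2 (by omega))
  exact h1 _ ⟨S, hS, _root_.rfl⟩

lemma measurableSet_coord {S : Set ℝ} (hS : MeasurableSet S) (t : ℕ) :
    MeasurableSet {ω : ℕ → ℝ | ω t ∈ S} :=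
  (measurable_pi_apply t) hS

lemma hitLe_eq (S : Set ℝ) (n : ℕ) :
    {ω : ℕ → ℝ | hitTime S ω ≤ (n : ℕ∞)} = ⋃ t ∈ Finset.Icc 1 n, {ω : ℕ → ℝ | ω t ∈ S} := by
  ext ω
  simp only [mem_setOf_eq, mem_iUnion, Finset.mem_Icc, hitTime_le_coe_iff]
  tauto

lemma measurableSet_hitLe_path {S : Set ℝ} (hS : MeasurableSet S) (n : ℕ) :
    MeasurableSet[pathSigma ℝ n] {ω : ℕ → ℝ | hitTime S ω ≤ (n : ℕ∞)} := by
  rw [hitLe_eq]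
  exact MeasurableSet.biUnion (Finset.Icc 1 n).countable_toSet
    (fun t ht => measurableSet_coord_path hS (Finset.mem_Icc.mp ht).2)

lemma measurableSet_hitLe {S : Set ℝ} (hS : MeasurableSet S) (n : ℕ) :
    MeasurableSet {ω : ℕ → ℝ | hitTime S ω ≤ (n : ℕ∞)} :=
  pathSigma_le n _ (measurableSet_hitLe_path hS n)

lemma hitEq_eq (S : Set ℝ) {m : ℕ} (hm : 1 ≤ m) :
    {ω : ℕ → ℝ | hitTime S ω = (m : ℕ∞)}
      = {ω : ℕ → ℝ | ω m ∈ S} ∩ ⋂ t ∈ Finset.Ico 1 m, {ω : ℕ → ℝ | ω t ∈ S}ᶜ := by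
  ext ω
  simp only [mem_setOf_eq, mem_inter_iff, mem_iInter, Finset.mem_Ico, hitTime_eq_coe_iff,
    mem_compl_iff, mem_setOf_eq]
  tauto

lemma measurableSet_hitEq {S : Set ℝ} (hS : MeasurableSet S) (m : ℕ) :
    MeasurableSet {ω : ℕ → ℝ | hitTime S ω = (m : ℕ∞)} := by
  rcases Nat.eq_zero_or_pos m with hm | hm
  · subst hm
    convert MeasurableSet.empty
    ext ω
    simp only [mem_setOf_eq, mem_empty_iff_false, iff_false, Nat.cast_zero]
    intro h
    rw [(by norm_cast : ((0:ℕ∞)) = ((0:ℕ):ℕ∞)), hitTime_eq_coe_iff] at h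
    omega
  · rw [hitEq_eq S hm]
    exact (measurableSet_coord hS m).inter
      (MeasurableSet.biInter (Finset.Ico 1 m).countable_toSet
        (fun t _ => (measurableSet_coord hS t).compl))

/-- splice a family of functions along the hitting time -/
def hitSplice (S : Set ℝ) (G : ℕ → (ℕ → ℝ) → ℝ) (Gtop : (ℕ → ℝ) → ℝ) (ω : ℕ → ℝ) : ℝ :=
  if hitTime S ω = ⊤ then Gtop ω else G (hitTime S ω).toNat ω

lemma measurable_hitSplice {S : Set ℝ} (hS : MeasurableSet S) {G : ℕ → (ℕ → ℝ) → ℝ}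
    {Gtop : (ℕ → ℝ) → ℝ} (hG : ∀ m, Measurable (G m)) (hGt : Measurable Gtop) :
    Measurable (hitSplice S G Gtop) := by
  have key : ∀ ω, Tendsto (fun n : ℕ => Set.indicator {ω' : ℕ → ℝ | hitTime S ω' ≤ (n:ℕ∞)}ᶜ Gtop ω
      + ∑ m ∈ Finset.range (n+1),
          Set.indicator {ω' : ℕ → ℝ | hitTime S ω' = (m:ℕ∞)} (G m) ω) atTop
      (𝓝 (hitSplice S G Gtop ω)) := by
    intro ω
    rcases eq_or_ne (hitTime S ω) ⊤ with htop | hne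
    · apply tendsto_const_nhds.congr'
      filter_upwards [eventually_ge_atTop 0] with n _
      have h1 : ω ∈ {ω' : ℕ → ℝ | hitTime S ω' ≤ (n:ℕ∞)}ᶜ := by
        simp only [mem_compl_iff, mem_setOf_eq, htop]
        exact fun h => absurd (top_le_iff.mp h).symm (by simp)
      have h2 : ∀ m ∈ Finset.range (n+1),
          Set.indicator {ω' : ℕ → ℝ | hitTime S ω' = (m:ℕ∞)} (G m) ω = 0 := by
        intro m _
        apply Set.indicator_of_notMem
        simp only [mem_setOf_eq, htop]
        simp
      rw [Set.indicator_of_mem h1, Finset.sum_congr _root_.rfl h2, Finset.sum_const_zero, add_zero,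
        hitSplice, if_pos htop]
    · obtain ⟨m₀, hm₀⟩ := WithTop.ne_top_iff_exists.mp hne
      apply tendsto_const_nhds.congr'
      filter_upwards [eventually_ge_atTop m₀] with n hn
      have hval : hitTime S ω = (m₀ : ℕ∞) := hm₀.symm
      have h1 : ω ∉ {ω' : ℕ → ℝ | hitTime S ω' ≤ (n:ℕ∞)}ᶜ := by
        simp only [mem_compl_iff, mem_setOf_eq, hval, not_not]
        exact_mod_cast hn
      have h2 : (∑ m ∈ Finset.range (n+1),
          Set.indicator {ω' : ℕ → ℝ | hitTime S ω' = (m:ℕ∞)} (G m) ω) = G m₀ ω := by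
        rw [Finset.sum_eq_single m₀]
        · exact Set.indicator_of_mem (by exact hval) _
        · intro m _ hmm
          apply Set.indicator_of_notMem
          simp only [mem_setOf_eq, hval]
          exact fun h => hmm (by exact_mod_cast h.symm)
        · intro h
          exact absurd (Finset.mem_range.2 (by omega)) h
      rw [Set.indicator_of_notMem h1, h2, zero_add, hitSplice, if_neg hne, hval]
      simp
  apply measurable_of_tendsto_metrizable' atTop ?_ (tendsto_pi_nhds.mpr key)
  intro n
  exact ((hGt.indicator (measurableSet_hitLe hS n).compl)).add
    (Finset.measurable_sum _ fun m _ => (hG m).indicator (measurableSet_hitEq hS m))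



section markov
variable {u p : ℝ} {Pr : Kernel ℝ (ℕ → ℝ)} {Q : Kernel ℝ ℝ}

lemma markov_const [IsMarkovKernel Pr] (hc : IsMarkovChainLaw Pr Q) (x a : ℝ) (n : ℕ)
    (B : Set (ℕ → ℝ)) (hB : MeasurableSet[pathSigma ℝ n] B) (hBa : ∀ ω ∈ B, ω n = a)
    (A : Set ℝ) (hA : MeasurableSet A) :
    Pr x (B ∩ {ω | ω (n+1) ∈ A}) = Q a A * Pr x B := by
  rw [hc.markov x n B hB A hA]
  have hB' : MeasurableSet B := pathSigma_le n B hB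
  rw [setLIntegral_congr_fun hB'
    ((fun ω hω => by rw [hBa ω hω] : ∀ ω ∈ B, Q (ω n) A = Q a A))]
  simp [Measure.restrict_apply_univ]

lemma Q_up (hu : 1 < u) (hp0 : 0 ≤ p) (hp1 : p ≤ 1)
    (hQ : ∀ x : ℝ, Q x = ENNReal.ofReal p • Measure.dirac (u * x)
      + ENNReal.ofReal (1 - p) • Measure.dirac (x / u)) {a : ℝ} (ha : 0 < a) :
    Q a {u * a} = ENNReal.ofReal p := by
  have hne : a / u ≠ u * a := by
    intro h
    have h1 : a / u < a := div_lt_self ha (by linarith)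
    have h2 : a < u * a := by nlinarith
    rw [h] at h1; linarith
  rw [hQ a]
  simp only [Measure.coe_add, Measure.coe_smul, Pi.add_apply, Pi.smul_apply, smul_eq_mul]
  rw [Measure.dirac_apply' _ (measurableSet_singleton _),
    Measure.dirac_apply' _ (measurableSet_singleton _)]
  rw [Set.indicator_of_mem (Set.mem_singleton _),
    Set.indicator_of_notMem (fun hmem => hne (Set.mem_singleton_iff.mp hmem))]
  simp

lemma Q_down (hu : 1 < u) (hp0 : 0 ≤ p) (hp1 : p ≤ 1)
    (hQ : ∀ x : ℝ, Q x = ENNReal.ofReal p • Measure.dirac (u * x)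
      + ENNReal.ofReal (1 - p) • Measure.dirac (x / u)) {a : ℝ} (ha : 0 < a) :
    Q a {a / u} = ENNReal.ofReal (1 - p) := by
  have hne : u * a ≠ a / u := by
    intro h
    have h1 : a / u < a := div_lt_self ha (by linarith)
    have h2 : a < u * a := by nlinarith
    rw [h] at h2; linarith
  rw [hQ a]
  simp only [Measure.coe_add, Measure.coe_smul, Pi.add_apply, Pi.smul_apply, smul_eq_mul]
  rw [Measure.dirac_apply' _ (measurableSet_singleton _),
    Measure.dirac_apply' _ (measurableSet_singleton _)]
  rw [Set.indicator_of_mem (Set.mem_singleton _),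
    Set.indicator_of_notMem (fun hmem => hne (Set.mem_singleton_iff.mp hmem))]
  simp

lemma Q_grid (hu : 1 < u) (hp0 : 0 ≤ p) (hp1 : p ≤ 1)
    (hQ : ∀ x : ℝ, Q x = ENNReal.ofReal p • Measure.dirac (u * x)
      + ENNReal.ofReal (1 - p) • Measure.dirac (x / u)) {a : ℝ} (ha : a ∈ binGrid u) :
    Q a (binGrid u) = 1 := by
  rw [hQ a]
  simp only [Measure.coe_add, Measure.coe_smul, Pi.add_apply, Pi.smul_apply, smul_eq_mul]
  rw [Measure.dirac_apply' _ grid_measurable, Measure.dirac_apply' _ grid_measurable]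
  rw [Set.indicator_of_mem (grid_mul hu ha), Set.indicator_of_mem (grid_div hu ha)]
  simp only [Pi.one_apply, mul_one]
  rw [← ENNReal.ofReal_add hp0 (by linarith)]
  norm_num

lemma Q_pair (hu : 1 < u) (hp0 : 0 ≤ p) (hp1 : p ≤ 1)
    (hQ : ∀ x : ℝ, Q x = ENNReal.ofReal p • Measure.dirac (u * x)
      + ENNReal.ofReal (1 - p) • Measure.dirac (x / u)) (a : ℝ) :
    Q a ({u * a, a / u} : Set ℝ) = 1 := by
  rw [hQ a]
  have hms : MeasurableSet ({u * a, a / u} : Set ℝ) :=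
    (measurableSet_singleton _).union (measurableSet_singleton _)
  simp only [Measure.coe_add, Measure.coe_smul, Pi.add_apply, Pi.smul_apply, smul_eq_mul]
  rw [Measure.dirac_apply' _ hms, Measure.dirac_apply' _ hms]
  rw [Set.indicator_of_mem (by simp : u * a ∈ ({u * a, a / u} : Set ℝ)),
    Set.indicator_of_mem (by simp : a / u ∈ ({u * a, a / u} : Set ℝ))]
  simp only [Pi.one_apply, mul_one]
  rw [← ENNReal.ofReal_add hp0 (by linarith)]
  norm_num

end markov

section paths
variable {u p : ℝ} {Pr : Kernel ℝ (ℕ → ℝ)} {Q : Kernel ℝ ℝ} [IsMarkovKernel Pr] [IsMarkovKernel Q]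

lemma measurableSet_coord_eq_path {a : ℝ} {t n : ℕ} (ht : t ≤ n) :
    MeasurableSet[pathSigma ℝ n] {ω : ℕ → ℝ | ω t = a} :=
  measurableSet_coord_path (measurableSet_singleton a) ht

lemma start_ae (hc : IsMarkovChainLaw Pr Q) (x : ℝ) : ∀ᵐ ω ∂(Pr x), ω 0 = x := by
  rw [ae_iff]
  have hm : MeasurableSet {ω : ℕ → ℝ | ω 0 = x} :=
    pathSigma_le 0 _ (measurableSet_coord_eq_path le_rfl)
  have : {ω : ℕ → ℝ | ¬ ω 0 = x} = {ω : ℕ → ℝ | ω 0 = x}ᶜ := _root_.rfl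
  rw [this, prob_compl_eq_zero_iff hm]
  exact hc.start x

lemma grid_ae (hu : 1 < u) (hp0 : 0 ≤ p) (hp1 : p ≤ 1) (hc : IsMarkovChainLaw Pr Q)
    (hQ : ∀ x : ℝ, Q x = ENNReal.ofReal p • Measure.dirac (u * x)
      + ENNReal.ofReal (1 - p) • Measure.dirac (x / u))
    {x : ℝ} (hx : x ∈ binGrid u) :
    ∀ᵐ ω ∂(Pr x), ∀ n, ω n ∈ binGrid u := by
  set G : ℕ → Set (ℕ → ℝ) :=
    fun n => ⋂ k ∈ Finset.range (n+1), {ω : ℕ → ℝ | ω k ∈ binGrid u} with hG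
  have hGmp : ∀ n, MeasurableSet[pathSigma ℝ n] (G n) := by
    intro n
    exact MeasurableSet.biInter (Finset.range (n+1)).countable_toSet
      (fun k hk => measurableSet_coord_path grid_measurable
        (Nat.lt_succ_iff.mp (Finset.mem_range.mp hk)))
  have hGm : ∀ n, MeasurableSet (G n) := fun n => pathSigma_le n _ (hGmp n)
  have hsub : ∀ n, G n ⊆ {ω : ℕ → ℝ | ω n ∈ binGrid u} := by
    intro n ω hω
    have := mem_iInter₂.mp hω n (Finset.mem_range.mpr (Nat.lt_succ_self n))
    exact this
  have h1 : ∀ n, Pr x (G n) = 1 := by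
    intro n
    induction n with
    | zero =>
      refine le_antisymm prob_le_one ?_
      calc (1:ℝ≥0∞) = Pr x {ω | ω 0 = x} := (hc.start x).symm
        _ ≤ Pr x (G 0) := measure_mono (by
            intro ω hω
            apply mem_iInter₂.mpr
            intro k hk
            have hk0 : k = 0 := by
              have := Finset.mem_range.mp hk; omega
            subst hk0
            simp only [mem_setOf_eq] at hω ⊢
            rw [hω]; exact hx)
    | succ n ih =>
      have hstep : G (n+1) = G n ∩ {ω | ω (n+1) ∈ binGrid u} := by
        ext ω
        simp only [hG, mem_iInter, Finset.mem_range, mem_inter_iff, mem_setOf_eq]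
        constructor
        · intro h
          exact ⟨fun k hk => h k (by omega), h (n+1) (by omega)⟩
        · rintro ⟨h1, h2⟩ k hk
          rcases Nat.lt_succ_iff_lt_or_eq.mp hk with h | h
          · exact h1 k h
          · subst h; exact h2
      rw [hstep, hc.markov x n (G n) (hGmp n) _ grid_measurable]
      rw [setLIntegral_congr_fun (hGm n)
        ((fun ω hω => Q_grid hu hp0 hp1 hQ (hsub n hω) :
          ∀ ω ∈ G n, Q (ω n) (binGrid u) = 1))]
      rw [setLIntegral_one, ih]
  rw [ae_all_iff]
  intro n
  rw [ae_iff]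
  have hmn : MeasurableSet {ω : ℕ → ℝ | ω n ∈ binGrid u} := measurableSet_coord grid_measurable n
  have : {a : ℕ → ℝ | ¬ a n ∈ binGrid u} = {ω : ℕ → ℝ | ω n ∈ binGrid u}ᶜ := _root_.rfl
  rw [this, prob_compl_eq_zero_iff hmn]
  exact le_antisymm prob_le_one ((h1 n).symm.le.trans (measure_mono (hsub n)))

lemma step_ae (hu : 1 < u) (hp0 : 0 ≤ p) (hp1 : p ≤ 1) (hc : IsMarkovChainLaw Pr Q)
    (hQ : ∀ x : ℝ, Q x = ENNReal.ofReal p • Measure.dirac (u * x)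
      + ENNReal.ofReal (1 - p) • Measure.dirac (x / u)) (x : ℝ) :
    ∀ᵐ ω ∂(Pr x), ∀ n, ω n ∈ binGrid u → (ω (n+1) = u * ω n ∨ ω (n+1) = ω n / u) := by
  rw [ae_all_iff]
  intro n
  rw [ae_iff]
  refine measure_mono_null ?_ (measure_iUnion_null (s := fun i : ℤ =>
    {ω : ℕ → ℝ | ω n = u ^ i} ∩ {ω | ω (n+1) ∈ ({u * u ^ i, u ^ i / u} : Set ℝ)ᶜ}) ?_)
  · intro ω hω
    simp only [mem_setOf_eq, not_forall, not_or] at hω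
    obtain ⟨hgrid, h1, h2⟩ := hω
    obtain ⟨i, hi⟩ := hgrid
    refine mem_iUnion.mpr ⟨i, ⟨hi, ?_⟩⟩
    simp only [mem_compl_iff, mem_insert_iff, mem_singleton_iff, not_or]
    rw [← hi]
    exact ⟨h1, h2⟩
  · intro i
    have hpm : MeasurableSet ({u * u ^ i, u ^ i / u} : Set ℝ) := by
      rw [Set.insert_eq]
      exact (measurableSet_singleton _).union (measurableSet_singleton _)
    have hpairm : MeasurableSet (({u * u ^ i, u ^ i / u} : Set ℝ)ᶜ) := hpm.compl
    rw [markov_const hc x (u ^ i) n _ (measurableSet_coord_eq_path le_rfl)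
      (fun ω hω => hω) _ hpairm]
    have hQc : Q (u ^ i) (({u * u ^ i, u ^ i / u} : Set ℝ)ᶜ) = 0 := by
      have htot : Q (u ^ i) ({u * u ^ i, u ^ i / u} : Set ℝ) = 1 := Q_pair hu hp0 hp1 hQ _
      have := measure_compl hpm (measure_ne_top (Q (u^i)) _)
      rw [htot] at this
      simpa using this
    rw [hQc, zero_mul]

def goodPath (u x : ℝ) : Set (ℕ → ℝ) :=
  {ω | ω 0 = x ∧ ∀ n, ω n ∈ binGrid u ∧ (ω (n+1) = u * ω n ∨ ω (n+1) = ω n / u)}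

lemma goodPath_ae (hu : 1 < u) (hp0 : 0 ≤ p) (hp1 : p ≤ 1) (hc : IsMarkovChainLaw Pr Q)
    (hQ : ∀ x : ℝ, Q x = ENNReal.ofReal p • Measure.dirac (u * x)
      + ENNReal.ofReal (1 - p) • Measure.dirac (x / u))
    {x : ℝ} (hx : x ∈ binGrid u) :
    ∀ᵐ ω ∂(Pr x), ω ∈ goodPath u x := by
  filter_upwards [start_ae hc x, grid_ae hu hp0 hp1 hc hQ hx, step_ae hu hp0 hp1 hc hQ x]
    with ω h0 h1 h2
  exact ⟨h0, fun n => ⟨h1 n, h2 n (h1 n)⟩⟩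

lemma cylinder_prob (hu : 1 < u) (hp0 : 0 ≤ p) (hp1 : p ≤ 1) (hc : IsMarkovChainLaw Pr Q)
    (hQ : ∀ x : ℝ, Q x = ENNReal.ofReal p • Measure.dirac (u * x)
      + ENNReal.ofReal (1 - p) • Measure.dirac (x / u))
    {x : ℝ} (hx : 0 < x) (m : ℕ) :
    Pr x {ω | ∀ k ≤ m, ω k = x / u ^ k} = ENNReal.ofReal ((1-p)^m) := by
  induction m with
  | zero =>
    have hset : {ω : ℕ → ℝ | ∀ k ≤ 0, ω k = x / u ^ k} = {ω | ω 0 = x} := by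
      ext ω
      simp only [mem_setOf_eq, Nat.le_zero]
      constructor
      · intro h; simpa using h 0 _root_.rfl
      · intro h k hk; subst hk; simpa using h
    rw [hset, hc.start x]; simp
  | succ m ih =>
    have hset : {ω : ℕ → ℝ | ∀ k ≤ m+1, ω k = x / u ^ k}
        = {ω : ℕ → ℝ | ∀ k ≤ m, ω k = x / u^k}
          ∩ {ω | ω (m+1) ∈ ({x / u^(m+1)} : Set ℝ)} := by
      ext ω
      simp only [mem_setOf_eq, mem_inter_iff, mem_singleton_iff]
      constructor
      · intro h
        exact ⟨fun k hk => h k (by omega), h (m+1) le_rfl⟩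
      · rintro ⟨h1, h2⟩ k hk
        rcases Nat.lt_succ_iff_lt_or_eq.mp (by omega : k < m + 2) with h | h
        · exact h1 k (by omega)
        · subst h; exact h2
    have hBmeas : MeasurableSet[pathSigma ℝ m] {ω : ℕ → ℝ | ∀ k ≤ m, ω k = x / u^k} := by
      have : {ω : ℕ → ℝ | ∀ k ≤ m, ω k = x / u^k}
          = ⋂ k ∈ Finset.range (m+1), {ω : ℕ → ℝ | ω k = x / u^k} := by
        ext ω
        simp only [mem_setOf_eq, mem_iInter, Finset.mem_range, Nat.lt_succ_iff]
      rw [this]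
      exact MeasurableSet.biInter (Finset.range (m+1)).countable_toSet
        (fun k hk => measurableSet_coord_eq_path (Nat.lt_succ_iff.mp (Finset.mem_range.mp hk)))
    rw [hset, markov_const hc x (x / u^m) m _ hBmeas
      (fun ω hω => hω m le_rfl) _ (measurableSet_singleton _)]
    have hdd : x / u^(m+1) = (x / u^m) / u := by
      rw [pow_succ, div_div]
    rw [show ({x / u^(m+1)} : Set ℝ) = {(x / u^m) / u} by rw [hdd],
      Q_down hu hp0 hp1 hQ (by positivity), ih,
      ← ENNReal.ofReal_mul (by linarith : (0:ℝ) ≤ 1 - p)]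
    rw [pow_succ]
    ring_nf

end paths

section payoff
variable {u p β K : ℝ} {S : Set ℝ} {δ : ℕ → ℝ} {f : ℝ → ℝ}

lemma binPay_nonneg (K x : ℝ) : 0 ≤ binPay K x := le_max_right _ _

lemma binPay_le {x : ℝ} (hx : 0 < x) (hK : 0 < K) : binPay K x ≤ K :=
  max_le (by linarith) hK.le

lemma binPay_of_le {x : ℝ} (h : x ≤ K) : binPay K x = K - x := max_eq_left (by linarith)

lemma binPay_of_ge {x : ℝ} (h : K ≤ x) : binPay K x = 0 := max_eq_right (by linarith)

lemma binDisc_pos (hβ : 0 < β) (t : ℕ) : 0 < binDisc β t := by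
  unfold binDisc
  have : (0:ℝ) ≤ (t:ℝ) := Nat.cast_nonneg t
  positivity

lemma binDisc_le_one (hβ : 0 < β) (t : ℕ) : binDisc β t ≤ 1 := by
  unfold binDisc
  have ht : (0:ℝ) ≤ (t:ℝ) := Nat.cast_nonneg t
  rw [div_le_one (by nlinarith)]
  nlinarith

lemma stopPayoff_eq_splice :
    stopPayoff δ f S = hitSplice S (fun m ω => δ m * f (ω m)) (fun _ => 0) := by
  funext ω
  by_cases h : hitTime S ω = ⊤ <;> simp [stopPayoff, hitSplice, h]

lemma measurable_stopPayoff (hS : MeasurableSet S) (hf : Measurable f) :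
    Measurable (stopPayoff δ f S) := by
  rw [stopPayoff_eq_splice]
  exact measurable_hitSplice hS
    (fun m => measurable_const.mul (hf.comp (measurable_pi_apply m))) measurable_const

lemma hit_mem {ω : ℕ → ℝ} (h : hitTime S ω ≠ ⊤) : ω (hitTime S ω).toNat ∈ S := by
  obtain ⟨m, hm⟩ := WithTop.ne_top_iff_exists.mp h
  have hm' : hitTime S ω = (m : ℕ∞) := hm.symm
  rw [hm', ENat.toNat_coe]
  exact (hitTime_eq_coe_iff.mp hm').2.1

lemma stopPayoff_nonneg (hβ : 0 < β) (ω : ℕ → ℝ) :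
    0 ≤ stopPayoff (binDisc β) (binPay K) S ω := by
  unfold stopPayoff
  split
  · exact le_rfl
  · exact mul_nonneg (binDisc_pos hβ _).le (binPay_nonneg _ _)

lemma stopPayoff_bound (hu : 1 < u) (hSsub : S ⊆ binGrid u) (hβ : 0 < β) (hK : 0 < K)
    (ω : ℕ → ℝ) : ‖stopPayoff (binDisc β) (binPay K) S ω‖ ≤ K := by
  rw [Real.norm_eq_abs, abs_of_nonneg (stopPayoff_nonneg hβ ω)]
  unfold stopPayoff
  split
  · exact hK.le
  · next h =>
    have hmem := hit_mem (S := S) (ω := ω) h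
    have hpos : 0 < ω (hitTime S ω).toNat := grid_pos hu (hSsub hmem)
    calc binDisc β (hitTime S ω).toNat * binPay K (ω (hitTime S ω).toNat)
        ≤ 1 * K := mul_le_mul (binDisc_le_one hβ _) (binPay_le hpos hK)
            (binPay_nonneg _ _) zero_le_one
      _ = K := one_mul K

lemma integrable_stopPayoff {Pr : Kernel ℝ (ℕ → ℝ)} [IsMarkovKernel Pr]
    (hu : 1 < u) (hS : MeasurableSet S) (hSsub : S ⊆ binGrid u) (hβ : 0 < β) (hK : 0 < K)
    (x : ℝ) : Integrable (stopPayoff (binDisc β) (binPay K) S) (Pr x) :=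
  ⟨(measurable_stopPayoff hS ((continuous_const.sub continuous_id).max
      continuous_const).measurable).aestronglyMeasurable,
    HasFiniteIntegral.of_bounded (ae_of_all _ (stopPayoff_bound hu hSsub hβ hK))⟩

lemma S_measurable (hSsub : S ⊆ binGrid u) : MeasurableSet S :=
  (grid_countable.mono hSsub).measurableSet

end payoff

section partAB
variable {u p β K : ℝ} {S : Set ℝ} {Pr : Kernel ℝ (ℕ → ℝ)} {Q : Kernel ℝ ℝ}
  [IsMarkovKernel Pr] [IsMarkovKernel Q]

/-- Part (a): an equilibrium contains a point strictly below K. -/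
lemma exists_low_point (hu : 1 < u) (hK : 0 < K)
    (hSsub : S ⊆ binGrid u) (hS : ΘBin Pr u β K S = S) :
    ∃ a ∈ S, a < K := by
  by_contra hcon
  push_neg at hcon
  have hzero : ∀ ω : ℕ → ℝ, stopPayoff (binDisc β) (binPay K) S ω = 0 := by
    intro ω
    unfold stopPayoff
    split
    · rfl
    · next h =>
      rw [binPay_of_ge (hcon _ (hit_mem h)), mul_zero]
  obtain ⟨i, hi⟩ := grid_exists_lt hu hK
  have hmem : (u:ℝ) ^ i ∈ ΘBin Pr u β K S := by
    refine ⟨grid_mem i, ?_⟩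
    have : valJ Pr (binDisc β) (binPay K) S ((u:ℝ)^i) = 0 := by
      unfold valJ
      rw [funext hzero]
      exact integral_zero _ _
    rw [this]
    exact binPay_nonneg _ _
  rw [hS] at hmem
  exact absurd hi (not_lt.mpr (hcon _ hmem))

/-- Part (b): an equilibrium contains no point ≥ K. -/
lemma no_high_point (hu : 1 < u) (hp_lb : 1 / (u + 1) ≤ p) (hp_ub : p < 1)
    (hβ : 0 < β) (hK : 0 < K) (hc : IsMarkovChainLaw Pr Q)
    (hQ : ∀ x : ℝ, Q x = ENNReal.ofReal p • Measure.dirac (u * x)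
      + ENNReal.ofReal (1 - p) • Measure.dirac (x / u))
    (hSsub : S ⊆ binGrid u) (hS : ΘBin Pr u β K S = S) :
    ∀ x ∈ S, x < K := by
  have hp0 : 0 < p := lt_of_lt_of_le (by positivity) hp_lb
  by_contra hcon
  push_neg at hcon
  obtain ⟨x₀, hx₀S, hx₀K⟩ := hcon
  -- the least element of S ∩ [K, ∞)
  obtain ⟨i₀, hi₀⟩ := grid_exists_lt hu hK
  have hbdd : ∀ i : ℤ, ((u:ℝ)^i ∈ S ∧ K ≤ (u:ℝ)^i) → i₀ ≤ i := by
    rintro i ⟨_, hKi⟩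
    by_contra hlt
    push_neg at hlt
    exact absurd (lt_of_le_of_lt hKi (lt_of_le_of_lt ((grid_strictMono hu).monotone hlt.le) hi₀))
      (lt_irrefl _)
  obtain ⟨ix₀, hix₀⟩ := hSsub hx₀S
  obtain ⟨ix, ⟨hixS, hixK⟩, hixmin⟩ := Int.exists_least_of_bdd
    (P := fun i : ℤ => (u:ℝ)^i ∈ S ∧ K ≤ (u:ℝ)^i) ⟨i₀, hbdd⟩ ⟨ix₀, hix₀ ▸ hx₀S, hix₀ ▸ hx₀K⟩
  set x : ℝ := (u:ℝ)^ix with hxdef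
  -- a point of S strictly below K
  obtain ⟨a, haS, haK⟩ := exists_low_point hu hK hSsub hS
  obtain ⟨ia, hia⟩ := hSsub haS
  have hiaix : ia < ix := by
    have : a < x := lt_of_lt_of_le haK hixK
    rw [hia] at this
    exact (grid_strictMono hu).lt_iff_lt.mp this
  have hdivpow : ∀ k : ℕ, x / u ^ k = (u:ℝ) ^ (ix - (k:ℤ)) := by
    intro k
    rw [hxdef, ← zpow_natCast u k, ← zpow_sub₀ (by positivity : (u:ℝ) ≠ 0)]
  have hPne : ∃ k : ℕ, 1 ≤ k ∧ x / u ^ k ∈ S := by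
    refine ⟨(ix - ia).toNat, by omega, ?_⟩
    rw [hdivpow]
    have : ix - ((ix - ia).toNat : ℤ) = ia := by omega
    rw [this, ← hia]
    exact haS
  set m := Nat.find hPne with hmdef
  have hm1 : 1 ≤ m := (Nat.find_spec hPne).1
  have hzS : x / u ^ m ∈ S := (Nat.find_spec hPne).2
  have hznot : ∀ k, 1 ≤ k → k < m → x / u ^ k ∉ S := by
    intro k hk1 hkm hkS
    exact Nat.find_min hPne hkm ⟨hk1, hkS⟩
  set z := x / u ^ m with hzdef
  have hzK : z < K := by
    by_contra hge
    push_neg at hge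
    have : ix ≤ ix - (m:ℤ) := by
      apply hixmin
      rw [hzdef, hdivpow] at hzS hge
      exact ⟨hzS, hge⟩
    omega
  have hzpos : 0 < z := grid_pos hu (hSsub hzS)
  have hxpos : 0 < x := by positivity
  -- on the cylinder, the payoff is constant positive
  set C := {ω : ℕ → ℝ | ∀ k ≤ m, ω k = x / u ^ k} with hCdef
  have hCmeas : MeasurableSet C := by
    have : C = ⋂ k ∈ Finset.range (m+1), {ω : ℕ → ℝ | ω k = x / u^k} := by
      ext ω
      simp only [hCdef, mem_setOf_eq, mem_iInter, Finset.mem_range, Nat.lt_succ_iff]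
    rw [this]
    exact MeasurableSet.biInter (Finset.range (m+1)).countable_toSet
      (fun k _ => pathSigma_le k _ (measurableSet_coord_eq_path le_rfl))
  have hhit : ∀ ω ∈ C, stopPayoff (binDisc β) (binPay K) S ω = binDisc β m * binPay K z := by
    intro ω hω
    have hht : hitTime S ω = (m : ℕ∞) := by
      rw [hitTime_eq_coe_iff]
      refine ⟨hm1, ?_, ?_⟩
      · rw [hω m le_rfl]; exact hzS
      · intro t ht1 htm
        rw [hω t (by omega)]
        exact hznot t ht1 htm
    unfold stopPayoff
    rw [if_neg (by rw [hht]; simp), hht]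
    simp only [ENat.toNat_coe]
    rw [hω m le_rfl]
  have hSm : MeasurableSet S := S_measurable hSsub
  have hInt := integrable_stopPayoff (Pr := Pr) hu hSm hSsub hβ hK x
  have hJge : (Pr x C).toReal * (binDisc β m * binPay K z)
      ≤ valJ Pr (binDisc β) (binPay K) S x := by
    unfold valJ
    calc (Pr x C).toReal * (binDisc β m * binPay K z)
        = ∫ ω in C, stopPayoff (binDisc β) (binPay K) S ω ∂(Pr x) := by
          rw [setIntegral_congr_fun hCmeas hhit, setIntegral_const, measureReal_def, smul_eq_mul]
      _ ≤ ∫ ω, stopPayoff (binDisc β) (binPay K) S ω ∂(Pr x) :=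
          setIntegral_le_integral hInt (ae_of_all _ (stopPayoff_nonneg hβ))
  have hCprob : Pr x C = ENNReal.ofReal ((1-p)^m) :=
    cylinder_prob hu hp0.le hp_ub.le hc hQ hxpos m
  have hJpos : 0 < valJ Pr (binDisc β) (binPay K) S x := by
    refine lt_of_lt_of_le ?_ hJge
    rw [hCprob, ENNReal.toReal_ofReal (pow_nonneg (by linarith) m)]
    have h1p : (0:ℝ) < 1 - p := by linarith
    have hpay : 0 < binPay K z := by
      rw [binPay_of_le hzK.le]; linarith
    have := binDisc_pos hβ m
    positivity
  have hxmem : x ∈ ΘBin Pr u β K S := hS.symm ▸ hixS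
  obtain ⟨-, hle⟩ := hxmem
  rw [binPay_of_ge hixK] at hle
  exact absurd (lt_of_lt_of_le hJpos hle) (lt_irrefl _)

end partAB

section partC
variable {u p β K : ℝ} {S : Set ℝ} {Pr : Kernel ℝ (ℕ → ℝ)} {Q : Kernel ℝ ℝ}
  [IsMarkovKernel Pr] [IsMarkovKernel Q]

/-- before hitting `S`, a good path starting strictly below `y ∈ S` stays `≤ y / u`. -/
lemma path_stays_low (hu : 1 < u) (hSsub : S ⊆ binGrid u) {y z : ℝ} (hyS : y ∈ S)
    (hz : z ∈ binGrid u) (hzy : z < y) {ω : ℕ → ℝ} (hω : ω ∈ goodPath u z) :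
    ∀ n : ℕ, ¬ (hitTime S ω ≤ (n : ℕ∞)) → ω n ≤ y / u := by
  intro n
  induction n with
  | zero =>
    intro _
    rw [hω.1]
    exact grid_le_div hu hz (hSsub hyS) hzy
  | succ n ih =>
    intro hnot
    have hypos : 0 < y := grid_pos hu (hSsub hyS)
    have hnotn : ¬ (hitTime S ω ≤ (n : ℕ∞)) := by
      intro h
      exact hnot (h.trans (by exact_mod_cast Nat.le_succ n))
    have h1 : ω n ≤ y / u := ih hnotn
    have hgpos : 0 < ω n := grid_pos hu (hω.2 n).1
    have h2 : ω (n+1) ≤ y := by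
      rcases (hω.2 n).2 with h | h
      · rw [h]
        calc u * ω n ≤ u * (y / u) := by nlinarith
          _ = y := by field_simp
      · rw [h]
        calc ω n / u ≤ ω n := div_le_self hgpos.le hu.le
          _ ≤ y / u := h1
          _ ≤ y := div_le_self hypos.le hu.le
    have hnmem : ω (n+1) ∉ S := (hitTime_not_le_iff.mp hnot) (n+1) (by omega) le_rfl
    have hne : ω (n+1) ≠ y := fun h => hnmem (h ▸ hyS)
    exact grid_le_div hu (hω.2 (n+1)).1 (hSsub hyS) (lt_of_le_of_ne h2 hne)

lemma path_growth (hu : 1 < u) {z : ℝ} (hzpos : 0 < z) {ω : ℕ → ℝ} (hω : ω ∈ goodPath u z) :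
    ∀ n, 0 < ω n ∧ ω n ≤ z * u ^ n := by
  intro n
  induction n with
  | zero => rw [hω.1]; simpa using hzpos
  | succ n ih =>
    have hpos : 0 < ω n := ih.1
    have hu0 : (0:ℝ) < u := by linarith
    constructor
    · rcases (hω.2 n).2 with h | h <;> rw [h] <;> positivity
    · rcases (hω.2 n).2 with h | h <;> rw [h, pow_succ]
      · nlinarith [ih.2]
      · calc ω n / u ≤ ω n := div_le_self hpos.le hu.le
          _ ≤ z * u ^ n := ih.2
          _ ≤ z * u ^ n * u := by nlinarith [pow_pos hu0 n]
          _ = z * (u ^ n * u) := by ring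

/-- Part (c): an equilibrium is downward closed below its maximum. -/
lemma downward_closed (hu : 1 < u) (hp_lb : 1 / (u + 1) ≤ p) (hp_ub : p < 1)
    (hβ : 0 < β) (hK : 0 < K) (hc : IsMarkovChainLaw Pr Q)
    (hQ : ∀ x : ℝ, Q x = ENNReal.ofReal p • Measure.dirac (u * x)
      + ENNReal.ofReal (1 - p) • Measure.dirac (x / u))
    (hSsub : S ⊆ binGrid u) (hS : ΘBin Pr u β K S = S)
    {y : ℝ} (hyS : y ∈ S) (hymax : ∀ w ∈ S, w ≤ y) (hyK : y < K)
    {z : ℝ} (hz : z ∈ binGrid u) (hzy : z < y) : z ∈ S := by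
  have hp0 : 0 < p := lt_of_lt_of_le (by positivity) hp_lb
  have hu0 : (0:ℝ) < u := by linarith
  have hypos : 0 < y := grid_pos hu (hSsub hyS)
  have hzpos : 0 < z := grid_pos hu hz
  have hSsub' : S ⊆ Set.Ioc 0 y := fun w hw => ⟨grid_pos hu (hSsub hw), hymax w hw⟩
  have hSm : MeasurableSet S := S_measurable hSsub
  set μ : Measure (ℕ → ℝ) := Pr z with hμdef
  have hGP : ∀ᵐ ω ∂μ, ω ∈ goodPath u z :=
    goodPath_ae hu hp0.le hp_ub.le hc hQ hz
  have hgridnull : ∀ k, μ {ω : ℕ → ℝ | ω k ∉ binGrid u} = 0 := by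
    intro k
    have hall := grid_ae (Pr := Pr) hu hp0.le hp_ub.le hc hQ hz
    rw [ae_all_iff] at hall
    have h := hall k
    rwa [ae_iff] at h
  have hstepnull : ∀ k, μ {ω : ℕ → ℝ |
      ¬ (ω k ∈ binGrid u → (ω (k+1) = u * ω k ∨ ω (k+1) = ω k / u))} = 0 := by
    intro k
    have hall := step_ae (Pr := Pr) hu hp0.le hp_ub.le hc hQ z
    rw [ae_all_iff] at hall
    have h := hall k
    rwa [ae_iff] at h
  -- F' = X_ρ on {ρ < ∞}
  set F' : (ℕ → ℝ) → ℝ := hitSplice S (fun m ω => ω m) (fun _ => 0) with hF'def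
  set H : ℕ → Set (ℕ → ℝ) := fun n => {ω | hitTime S ω ≤ (n : ℕ∞)} with hHdef
  have hHmeasp : ∀ n, MeasurableSet[pathSigma ℝ n] (H n) := fun n => measurableSet_hitLe_path hSm n
  have hHmeas : ∀ n, MeasurableSet (H n) := fun n => measurableSet_hitLe hSm n
  have hHmono : Monotone H := by
    intro a b hab ω hω
    simp only [hHdef, mem_setOf_eq] at hω ⊢
    exact le_trans hω (by exact_mod_cast hab)
  have hF'bound : ∀ ω, 0 ≤ F' ω ∧ F' ω ≤ y := by
    intro ω
    rw [hF'def]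
    unfold hitSplice
    split
    · exact ⟨le_rfl, hypos.le⟩
    · next h =>
      have hmem := hSsub' (hit_mem (S := S) h)
      exact ⟨hmem.1.le, hmem.2⟩
  have hF'meas : Measurable F' :=
    measurable_hitSplice hSm (fun m => measurable_pi_apply m) measurable_const
  have hF'int : Integrable F' μ :=
    ⟨hF'meas.aestronglyMeasurable, HasFiniteIntegral.of_bounded (C := y) (ae_of_all _ (fun ω => by
      rw [Real.norm_eq_abs, abs_of_nonneg (hF'bound ω).1]; exact (hF'bound ω).2))⟩
  have hEvalInt : ∀ n, Integrable (fun ω : ℕ → ℝ => ω n) μ := by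
    intro n
    refine ⟨(measurable_pi_apply n).aestronglyMeasurable,
      HasFiniteIntegral.of_bounded (C := z * u ^ n) ?_⟩
    filter_upwards [hGP] with ω hω
    have h := path_growth hu hzpos hω n
    rw [Real.norm_eq_abs, abs_of_nonneg h.1.le]
    exact h.2
  set I : ℕ → ℝ := fun n => (∫ ω in H n, F' ω ∂μ) + ∫ ω in (H n)ᶜ, ω n ∂μ with hIdef
  have hH0 : H 0 = ∅ := by
    ext ω
    simp only [hHdef, mem_setOf_eq, mem_empty_iff_false, iff_false, Nat.cast_zero]
    intro hle
    have h0 : hitTime S ω ≤ ((0:ℕ) : ℕ∞) := by exact_mod_cast hle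
    rcases hitTime_le_coe_iff.mp h0 with ⟨t, ht1, ht0, _⟩
    omega
  have hI0 : I 0 = z := by
    rw [hIdef]
    simp only [hH0, setIntegral_empty, compl_empty, Measure.restrict_univ, zero_add]
    rw [integral_congr_ae ((start_ae hc z).mono (fun ω hω => hω))]
    simp [hμdef]
  -- one-step submartingale inequality on the not-yet-stopped region
  have hcore : ∀ n, ∫ ω in (H n)ᶜ, ω n ∂μ ≤ ∫ ω in (H n)ᶜ, ω (n+1) ∂μ := by
    intro n
    set B : ℤ → Set (ℕ → ℝ) := fun i => (H n)ᶜ ∩ {ω | ω n = u ^ i} with hBdef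
    have hBmeas : ∀ i, MeasurableSet (B i) :=
      fun i => (hHmeas n).compl.inter (pathSigma_le n _ (measurableSet_coord_eq_path le_rfl))
    have hBmeasp : ∀ i, MeasurableSet[pathSigma ℝ n] (B i) := fun i =>
      MeasurableSet.inter (MeasurableSet.compl (hHmeasp n)) (measurableSet_coord_eq_path le_rfl)
    have hBdisj : Pairwise (Function.onFun Disjoint B) := by
      intro i j hij
      rw [Function.onFun, Set.disjoint_left]
      rintro ω ⟨-, h1⟩ ⟨-, h2⟩
      rw [mem_setOf_eq] at h1 h2
      exact hij ((grid_strictMono hu).injective (h1 ▸ h2 ▸ _root_.rfl))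
    have hBae : ((H n)ᶜ : Set (ℕ → ℝ)) =ᵐ[μ] (⋃ i, B i : Set (ℕ → ℝ)) := by
      rw [ae_eq_set]
      constructor
      · refine measure_mono_null ?_ (hgridnull n)
        rintro ω ⟨h1, h2⟩
        simp only [mem_setOf_eq]
        rintro ⟨i, hi⟩
        exact h2 (mem_iUnion.mpr ⟨i, ⟨h1, hi⟩⟩)
      · rw [Set.diff_eq_empty.mpr (iUnion_subset (fun i => inter_subset_left))]
        exact measure_empty
    have hIntOn1 : IntegrableOn (fun ω : ℕ → ℝ => ω n) (⋃ i, B i) μ := (hEvalInt n).integrableOn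
    have hIntOn2 : IntegrableOn (fun ω : ℕ → ℝ => ω (n+1)) (⋃ i, B i) μ :=
      (hEvalInt (n+1)).integrableOn
    have hsum1 := hasSum_integral_iUnion hBmeas hBdisj hIntOn1
    have hsum2 := hasSum_integral_iUnion hBmeas hBdisj hIntOn2
    rw [setIntegral_congr_set hBae, setIntegral_congr_set hBae]
    refine hasSum_le ?_ hsum1 hsum2
    intro i
    set a : ℝ := u ^ i with hadef
    have hapos : 0 < a := zpow_pos hu0 i
    have hBsub : ∀ ω ∈ B i, ω n = a := fun ω hω => hω.2
    have hleft : ∫ ω in B i, ω n ∂μ = a * (μ (B i)).toReal := by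
      rw [setIntegral_congr_fun (hBmeas i) hBsub, setIntegral_const, measureReal_def, smul_eq_mul, mul_comm]
    set Ea : Set (ℕ → ℝ) := B i ∩ {ω : ℕ → ℝ | ω (n+1) = u * a} with hEadef
    set Eb : Set (ℕ → ℝ) := B i ∩ {ω : ℕ → ℝ | ω (n+1) = a / u} with hEbdef
    have hsplit : B i =ᵐ[μ] (Ea ∪ Eb : Set (ℕ → ℝ)) := by
      rw [ae_eq_set]
      constructor
      · refine measure_mono_null ?_ (hstepnull n)
        rintro ω ⟨h1, h2⟩
        simp only [mem_setOf_eq]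
        intro hstep
        have hgrid : ω n ∈ binGrid u := by rw [h1.2]; exact grid_mem i
        rcases hstep hgrid with h | h
        · exact h2 (Or.inl (⟨h1, by rw [mem_setOf_eq, h, h1.2]⟩ : ω ∈ Ea))
        · exact h2 (Or.inr (⟨h1, by rw [mem_setOf_eq, h, h1.2]⟩ : ω ∈ Eb))
      · rw [Set.diff_eq_empty.mpr (union_subset inter_subset_left inter_subset_left)]
        exact measure_empty
    have hdisj2 : Disjoint Ea Eb := by
      rw [Set.disjoint_left]
      rintro ω ⟨-, h1⟩ ⟨-, h2⟩
      rw [mem_setOf_eq] at h1 h2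
      have heq : u * a = a / u := h1 ▸ h2 ▸ _root_.rfl
      have h3 : a / u < a := div_lt_self hapos hu
      have h4 : a < u * a := by nlinarith
      rw [heq] at h4; linarith
    have hmeas2a : MeasurableSet Ea :=
      (hBmeas i).inter (pathSigma_le (n+1) _ (measurableSet_coord_eq_path le_rfl))
    have hmeas2b : MeasurableSet Eb :=
      (hBmeas i).inter (pathSigma_le (n+1) _ (measurableSet_coord_eq_path le_rfl))
    have hPa : μ Ea = ENNReal.ofReal p * μ (B i) := by
      have h := markov_const hc z a n (B i) (hBmeasp i) hBsub {u * a} (measurableSet_singleton _)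
      rw [Q_up hu hp0.le hp_ub.le hQ hapos] at h
      exact h
    have hPb : μ Eb = ENNReal.ofReal (1 - p) * μ (B i) := by
      have h := markov_const hc z a n (B i) (hBmeasp i) hBsub {a / u} (measurableSet_singleton _)
      rw [Q_down hu hp0.le hp_ub.le hQ hapos] at h
      exact h
    have hright : ∫ ω in B i, ω (n+1) ∂μ
        = (p * (u * a) + (1 - p) * (a / u)) * (μ (B i)).toReal := by
      rw [setIntegral_congr_set hsplit,
        setIntegral_union hdisj2 hmeas2b ((hEvalInt (n+1)).integrableOn)
          ((hEvalInt (n+1)).integrableOn),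
        setIntegral_congr_fun hmeas2a (fun ω hω => hω.2),
        setIntegral_congr_fun hmeas2b (fun ω hω => hω.2),
        setIntegral_const, setIntegral_const, measureReal_def, measureReal_def, hPa, hPb,
        ENNReal.toReal_mul, ENNReal.toReal_mul,
        ENNReal.toReal_ofReal hp0.le, ENNReal.toReal_ofReal (by linarith : (0:ℝ) ≤ 1 - p)]
      simp only [smul_eq_mul]
      ring
    rw [hleft, hright]
    have hkey : 1 ≤ p * u + (1 - p) / u := by
      rw [div_le_iff₀ (by linarith : (0:ℝ) < u + 1)] at hp_lb
      have h1 : (0:ℝ) < u - 1 := by linarith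
      have heqk : p * u + (1 - p) / u - 1 = (u - 1) * (p * (u + 1) - 1) / u := by
        field_simp
        ring
      nlinarith [div_nonneg (mul_nonneg h1.le (by linarith : (0:ℝ) ≤ p * (u + 1) - 1)) hu0.le]
    have htR : (0:ℝ) ≤ (μ (B i)).toReal := ENNReal.toReal_nonneg
    have hform : p * (u * a) + (1 - p) * (a / u) = (p * u + (1 - p) / u) * a := by
      field_simp
    rw [hform]
    exact mul_le_mul_of_nonneg_right (le_mul_of_one_le_left hapos.le hkey) htR
  -- monotonicity of I
  have hImono : ∀ n, I n ≤ I (n+1) := by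
    intro n
    set A : Set (ℕ → ℝ) := {ω | hitTime S ω = ((n+1 : ℕ) : ℕ∞)} with hAdef
    have hAmeas : MeasurableSet A := measurableSet_hitEq hSm (n+1)
    have hHstep : H (n+1) = H n ∪ A := by
      ext ω
      simp only [hHdef, hAdef, mem_setOf_eq, mem_union]
      constructor
      · intro h
        have hne : hitTime S ω ≠ ⊤ := fun ht => by
          rw [ht] at h
          exact absurd (top_le_iff.mp h) (ENat.coe_ne_top _)
        obtain ⟨m, hm0⟩ := WithTop.ne_top_iff_exists.mp hne
        have hm : ((m : ℕ) : ℕ∞) = hitTime S ω := hm0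
        rw [← hm] at h ⊢
        have hmn : m ≤ n + 1 := by exact_mod_cast h
        rcases eq_or_lt_of_le hmn with h' | h'
        · exact Or.inr (by exact_mod_cast h')
        · exact Or.inl (by exact_mod_cast Nat.lt_succ_iff.mp h')
      · rintro (h | h)
        · exact h.trans (by exact_mod_cast Nat.le_succ n)
        · exact le_of_eq h
    have hdisjHA : Disjoint (H n) A := by
      rw [Set.disjoint_left]
      intro ω h1 h2
      rw [hAdef, mem_setOf_eq] at h2
      rw [hHdef, mem_setOf_eq, h2] at h1
      have : n + 1 ≤ n := by exact_mod_cast h1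
      omega
    have hAsub : A ⊆ (H n)ᶜ := fun ω hω => (Set.disjoint_right.mp hdisjHA) hω
    have hd1 : ∫ ω in H (n+1), F' ω ∂μ = ∫ ω in H n, F' ω ∂μ + ∫ ω in A, F' ω ∂μ := by
      rw [hHstep, setIntegral_union hdisjHA hAmeas hF'int.integrableOn hF'int.integrableOn]
    have hAF' : ∀ ω ∈ A, F' ω = ω (n+1) := by
      intro ω hω
      rw [hAdef, mem_setOf_eq] at hω
      rw [hF'def]
      unfold hitSplice
      have hne' : hitTime S ω ≠ ⊤ := by rw [hω]; exact ENat.coe_ne_top _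
      rw [if_neg hne', hω, ENat.toNat_coe]
    have hcompl : (H n)ᶜ = (H (n+1))ᶜ ∪ A := by
      ext ω
      constructor
      · intro h
        by_cases hA : ω ∈ A
        · exact Or.inr hA
        · refine Or.inl ?_
          rw [hHstep]
          rintro (h' | h')
          · exact h h'
          · exact hA h'
      · rintro (h | h)
        · intro h'
          exact h (hHstep ▸ Or.inl h' : ω ∈ H (n+1))
        · exact hAsub h
    have hdisj2' : Disjoint ((H (n+1))ᶜ) A := by
      rw [Set.disjoint_left]
      intro ω h1 h2
      exact h1 (hHstep ▸ Or.inr h2)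
    have hd2 : ∫ ω in (H n)ᶜ, ω (n+1) ∂μ
        = ∫ ω in (H (n+1))ᶜ, ω (n+1) ∂μ + ∫ ω in A, ω (n+1) ∂μ := by
      rw [hcompl, setIntegral_union hdisj2' hAmeas ((hEvalInt (n+1)).integrableOn)
        ((hEvalInt (n+1)).integrableOn)]
    calc I n = ∫ ω in H n, F' ω ∂μ + ∫ ω in (H n)ᶜ, ω n ∂μ := _root_.rfl
      _ ≤ ∫ ω in H n, F' ω ∂μ + ∫ ω in (H n)ᶜ, ω (n+1) ∂μ := by linarith [hcore n]
      _ = ∫ ω in H n, F' ω ∂μ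
          + (∫ ω in (H (n+1))ᶜ, ω (n+1) ∂μ + ∫ ω in A, ω (n+1) ∂μ) := by rw [hd2]
      _ = (∫ ω in H n, F' ω ∂μ + ∫ ω in A, F' ω ∂μ) + ∫ ω in (H (n+1))ᶜ, ω (n+1) ∂μ := by
          rw [setIntegral_congr_fun hAmeas hAF']
          ring
      _ = I (n+1) := by rw [hIdef]; simp only; rw [hd1]
  have hlb : ∀ n, z ≤ I n := by
    intro n
    induction n with
    | zero => rw [hI0]
    | succ n ih => exact ih.trans (hImono n)
  -- upper bound for I n
  have hub : ∀ n, I n ≤ (∫ ω in H n, F' ω ∂μ) + y * (μ ((H n)ᶜ)).toReal := by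
    intro n
    have hle : ∫ ω in (H n)ᶜ, ω n ∂μ ≤ ∫ ω in (H n)ᶜ, (fun _ : ℕ → ℝ => y) ω ∂μ := by
      refine setIntegral_mono_ae_restrict ((hEvalInt n).integrableOn)
        (integrable_const y).integrableOn ?_
      rw [Filter.EventuallyLE, ae_restrict_iff' (hHmeas n).compl]
      filter_upwards [hGP] with ω hω hmem
      have hmem' : ¬ (hitTime S ω ≤ (n : ℕ∞)) := hmem
      calc ω n ≤ y / u := path_stays_low hu hSsub hyS hz hzy hω n hmem'
        _ ≤ y := div_le_self hypos.le hu.le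
    rw [setIntegral_const, measureReal_def, smul_eq_mul, mul_comm] at hle
    exact add_le_add le_rfl hle
  -- limits
  set Hinf : Set (ℕ → ℝ) := ⋃ n, H n with hHinfdef
  have hHinfmeas : MeasurableSet Hinf := MeasurableSet.iUnion hHmeas
  have hmemH : ∀ ω, ω ∈ Hinf ↔ hitTime S ω ≠ ⊤ := by
    intro ω
    rw [hHinfdef, mem_iUnion]
    constructor
    · rintro ⟨n, hn⟩ htop
      rw [hHdef, mem_setOf_eq, htop] at hn
      exact absurd (top_le_iff.mp hn).symm (by simp)
    · intro h
      obtain ⟨m, hm⟩ := WithTop.ne_top_iff_exists.mp h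
      exact ⟨m, by rw [hHdef, mem_setOf_eq, ← hm]; exact le_rfl⟩
  have hL1 : Tendsto (fun n => ∫ ω in H n, F' ω ∂μ) atTop (𝓝 (∫ ω in Hinf, F' ω ∂μ)) := by
    rw [← integral_indicator hHinfmeas]
    have heq : ∀ n, ∫ ω in H n, F' ω ∂μ = ∫ ω, (H n).indicator F' ω ∂μ :=
      fun n => (integral_indicator (hHmeas n)).symm
    simp_rw [heq]
    refine tendsto_integral_of_dominated_convergence (fun _ => y)
      (fun n => (hF'meas.indicator (hHmeas n)).aestronglyMeasurable)
      (integrable_const y) (fun n => ae_of_all _ (fun ω => ?_)) (ae_of_all _ (fun ω => ?_))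
    · calc ‖(H n).indicator F' ω‖ ≤ ‖F' ω‖ := norm_indicator_le_norm_self F' ω
        _ ≤ y := by rw [Real.norm_eq_abs, abs_of_nonneg (hF'bound ω).1]; exact (hF'bound ω).2
    · by_cases hω : ω ∈ Hinf
      · obtain ⟨n₀, hn₀⟩ := mem_iUnion.mp hω
        apply tendsto_const_nhds.congr'
        filter_upwards [eventually_ge_atTop n₀] with n hn
        rw [Set.indicator_of_mem hω, Set.indicator_of_mem (hHmono hn hn₀)]
      · have hall : ∀ n, ω ∉ H n := fun n hn => hω (mem_iUnion.mpr ⟨n, hn⟩)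
        have : ∀ n, (H n).indicator F' ω = Hinf.indicator F' ω := by
          intro n
          rw [Set.indicator_of_notMem (hall n), Set.indicator_of_notMem hω]
        simp_rw [this]
        exact tendsto_const_nhds
  have hL2 : Tendsto (fun n => (μ ((H n)ᶜ)).toReal) atTop (𝓝 ((μ (Hinfᶜ)).toReal)) := by
    have h1 : Tendsto (fun n => μ ((H n)ᶜ)) atTop (𝓝 (μ (⋂ n, (H n)ᶜ))) :=
      tendsto_measure_iInter_atTop (fun n => ((hHmeas n).compl).nullMeasurableSet)
        (fun a b hab => compl_subset_compl.mpr (hHmono hab)) ⟨0, measure_ne_top μ _⟩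
    have h2 : (⋂ n, (H n)ᶜ) = Hinfᶜ := by rw [hHinfdef, compl_iUnion]
    rw [h2] at h1
    exact (ENNReal.tendsto_toReal (measure_ne_top μ _)).comp h1
  have hzle : z ≤ (∫ ω in Hinf, F' ω ∂μ) + y * (μ (Hinfᶜ)).toReal := by
    refine ge_of_tendsto' (hL1.add (hL2.const_mul y)) (fun n => ?_)
    exact (hlb n).trans (hub n)
  -- conclusion
  set F : (ℕ → ℝ) → ℝ := hitSplice S (fun m ω => K - ω m) (fun _ => 0) with hFdef
  have hFmeas : Measurable F := measurable_hitSplice hSm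
    (fun m => measurable_const.sub (measurable_pi_apply m)) measurable_const
  have hFbound : ∀ ω, 0 ≤ F ω ∧ F ω ≤ K := by
    intro ω
    rw [hFdef]
    unfold hitSplice
    split
    · exact ⟨le_rfl, hK.le⟩
    · next h =>
      have hmem := hSsub' (hit_mem (S := S) h)
      refine ⟨?_, ?_⟩
      · show (0:ℝ) ≤ K - ω (hitTime S ω).toNat
        linarith [hmem.2]
      · show K - ω (hitTime S ω).toNat ≤ K
        linarith [hmem.1]
  have hFint : Integrable F μ :=
    ⟨hFmeas.aestronglyMeasurable, HasFiniteIntegral.of_bounded (C := K) (ae_of_all _ (fun ω => by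
      rw [Real.norm_eq_abs, abs_of_nonneg (hFbound ω).1]; exact (hFbound ω).2))⟩
  have hsple : ∀ ω, stopPayoff (binDisc β) (binPay K) S ω ≤ F ω := by
    intro ω
    rw [stopPayoff_eq_splice, hFdef]
    unfold hitSplice
    by_cases h : hitTime S ω = ⊤
    · rw [if_pos h, if_pos h]
    · rw [if_neg h, if_neg h]
      have hmem := hSsub' (hit_mem (S := S) h)
      show binDisc β (hitTime S ω).toNat * binPay K (ω (hitTime S ω).toNat)
        ≤ K - ω (hitTime S ω).toNat
      rw [binPay_of_le (by linarith [hmem.2] : ω (hitTime S ω).toNat ≤ K)]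
      exact mul_le_of_le_one_left (by linarith [hmem.2]) (binDisc_le_one hβ _)
  have h2 : valJ Pr (binDisc β) (binPay K) S z ≤ ∫ ω, F ω ∂μ :=
    integral_mono (integrable_stopPayoff hu hSm hSsub hβ hK z) hFint hsple
  have h3 : ∫ ω, F ω ∂μ = ∫ ω in Hinf, F ω ∂μ + ∫ ω in Hinfᶜ, F ω ∂μ :=
    (integral_add_compl hHinfmeas hFint).symm
  have h4 : ∫ ω in Hinfᶜ, F ω ∂μ = 0 := by
    rw [setIntegral_congr_fun hHinfmeas.compl
      (fun ω hω => ?_ : ∀ ω ∈ Hinfᶜ, F ω = (fun _ => (0:ℝ)) ω)]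
    · simp
    · rw [hFdef]
      unfold hitSplice
      rw [if_pos (not_not.mp (fun hne => hω ((hmemH ω).mpr hne)))]
  have h5 : ∫ ω in Hinf, F ω ∂μ = K * (μ Hinf).toReal - ∫ ω in Hinf, F' ω ∂μ := by
    have hFF' : ∀ ω ∈ Hinf, F ω = (fun ω => K - F' ω) ω := by
      intro ω hω
      have hne := (hmemH ω).mp hω
      show F ω = K - F' ω
      rw [hFdef, hF'def]
      unfold hitSplice
      rw [if_neg hne, if_neg hne]
    rw [setIntegral_congr_fun hHinfmeas hFF',
      integral_sub (integrable_const K).integrableOn hF'int.integrableOn,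
      setIntegral_const, measureReal_def, smul_eq_mul, mul_comm]
  have hsum1 : (μ Hinf).toReal + (μ (Hinfᶜ)).toReal = 1 := by
    rw [← ENNReal.toReal_add (measure_ne_top μ _) (measure_ne_top μ _),
      measure_add_measure_compl hHinfmeas]
    simp [hμdef]
  have hJle : valJ Pr (binDisc β) (binPay K) S z ≤ K - z := by
    have htRpos : (0:ℝ) ≤ (μ (Hinfᶜ)).toReal := ENNReal.toReal_nonneg
    calc valJ Pr (binDisc β) (binPay K) S z ≤ ∫ ω, F ω ∂μ := h2
      _ = K * (μ Hinf).toReal - ∫ ω in Hinf, F' ω ∂μ := by rw [h3, h4, h5]; ring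
      _ ≤ K * (μ Hinf).toReal - (z - y * (μ (Hinfᶜ)).toReal) := by linarith [hzle]
      _ ≤ K * (μ Hinf).toReal + K * (μ (Hinfᶜ)).toReal - z := by nlinarith [hyK]
      _ = K - z := by rw [← mul_add, hsum1]; ring
  have hzθ : z ∈ ΘBin Pr u β K S := by
    refine ⟨hz, ?_⟩
    rw [binPay_of_le (by linarith : z ≤ K)]
    exact hJle
  rw [hS] at hzθ
  exact hzθ

end partC

end BEq

/-- In the binomial model, every equilibrium is a lower interval strictly below `K`:
if `S ∈ ℰ` then `S = (0,y] ∩ 𝕏` for some `y ∈ 𝕏` with `0 < y < K`. -/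
theorem binomial_equilibrium_is_interval
    (u p β K : ℝ) (hu : 1 < u) (hp_lb : 1 / (u + 1) ≤ p) (hp_ub : p < 1)
    (hβ : 0 < β) (hK : 0 < K)
    (Pr : Kernel ℝ (ℕ → ℝ)) [IsMarkovKernel Pr] (Q : Kernel ℝ ℝ) [IsMarkovKernel Q]
    (hchain : IsMarkovChainLaw Pr Q)
    (hQ : ∀ x : ℝ, Q x = ENNReal.ofReal p • Measure.dirac (u * x)
      + ENNReal.ofReal (1 - p) • Measure.dirac (x / u))
    (S : Set ℝ) (hSsub : S ⊆ binGrid u) (hS : ΘBin Pr u β K S = S) :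
    ∃ y ∈ binGrid u, 0 < y ∧ y < K ∧ S = Set.Ioc 0 y ∩ binGrid u := by
  classical
  obtain ⟨a, haS, haK⟩ := BEq.exists_low_point hu hK hSsub hS
  have hhigh := BEq.no_high_point hu hp_lb hp_ub hβ hK hchain hQ hSsub hS
  obtain ⟨n, hn⟩ := BEq.grid_exists_gt hu K
  have hbdd : ∀ i : ℤ, (u:ℝ) ^ i ∈ S → i ≤ (n:ℤ) := by
    intro i hi
    have h1 : (u:ℝ) ^ i < (u:ℝ) ^ (n:ℤ) := lt_trans (hhigh _ hi) hn
    exact ((BEq.grid_strictMono hu).lt_iff_lt.mp h1).le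
  obtain ⟨ia, hia⟩ := hSsub haS
  obtain ⟨iy, hiyS, hiymax⟩ := Int.exists_greatest_of_bdd
    (P := fun i : ℤ => (u:ℝ) ^ i ∈ S) ⟨(n:ℤ), hbdd⟩ ⟨ia, by show (u:ℝ)^ia ∈ S; rw [← hia]; exact haS⟩
  set y : ℝ := (u:ℝ) ^ iy with hydef
  have hymax : ∀ w ∈ S, w ≤ y := by
    intro w hw
    obtain ⟨j, hj⟩ := hSsub hw
    rw [hj]
    exact (BEq.grid_strictMono hu).monotone (hiymax j (hj ▸ hw))
  have hyK : y < K := hhigh y hiyS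
  have hypos : 0 < y := BEq.grid_pos hu (BEq.grid_mem iy)
  refine ⟨y, BEq.grid_mem iy, hypos, hyK, ?_⟩
  ext w
  constructor
  · intro hw
    exact ⟨⟨BEq.grid_pos hu (hSsub hw), hymax w hw⟩, hSsub hw⟩
  · rintro ⟨⟨hw0, hwy⟩, hwg⟩
    rcases eq_or_lt_of_le hwy with h | h
    · exact h ▸ hiyS
    · exact BEq.downward_closed hu hp_lb hp_ub hβ hK hchain hQ hSsub hS hiyS hymax hyK hwg h

end
end

section
/- In the binomial model, if S = (0,y] ∩ 𝕏 is an equilibrium for some y ∈ S ∩ (0,K), then y ≤ U·K, where U := (1 − (1−p)/(1+β) − p·α') / (1 − (1−p)/(u(1+β)) − p·α') and α' := E^1[1/(1+β(ξ+1))], with ξ the first hitting time of 0 by the random walk Y on ℤ with i.i.d. steps +1 with probability p and −1 with probability 1−p, E^n expectation for Y_0 = n, and the convention 1/(1+β·∞) := 0. -/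
open MeasureTheory ProbabilityTheory Set Filter Topology
open scoped ENNReal ENat

noncomputable section

/-- The first hitting time `ξ = inf {t ≥ 0 : Y_t = 0}` of `0` by the random walk path `ω`. -/
def walkHit (ω : ℕ → ℤ) : ℕ∞ :=
  sInf {n : ℕ∞ | ∃ t : ℕ, n = (t : ℕ∞) ∧ ω t = 0}

/-- The discounted quantity `1 / (1 + β(ξ + s))`, equal to `0` on `{ξ = ∞}`. -/
def walkDisc (β : ℝ) (s : ℕ) (ω : ℕ → ℤ) : ℝ :=
  if walkHit ω = ⊤ then 0 else 1 / (1 + β * ((walkHit ω).toNat + s))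

/-- `α_n = E^n[1 / (1 + βξ)]`. -/
def alphaWalk (PrY : Kernel ℤ (ℕ → ℤ)) (β : ℝ) (n : ℤ) : ℝ :=
  ∫ ω, walkDisc β 0 ω ∂(PrY n)

/-- `α' = E^1[1 / (1 + β(ξ + 1))]`. -/
def alphaWalk' (PrY : Kernel ℤ (ℕ → ℤ)) (β : ℝ) : ℝ :=
  ∫ ω, walkDisc β 1 ω ∂(PrY 1)

namespace BinAux

section PathSigma
variable {α : Type*} [mα : MeasurableSpace α]

lemma comap_eval_le_pathSigma {i n : ℕ} (h : i ≤ n) :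
    MeasurableSpace.comap (fun ω : ℕ → α => ω i) mα ≤ pathSigma α n :=
  le_iSup₂ (f := fun i (_ : i ∈ Finset.range (n+1)) =>
    MeasurableSpace.comap (fun ω : ℕ → α => ω i) mα) i (Finset.mem_range.mpr (by omega))

lemma pathSigma_le (n : ℕ) : pathSigma α n ≤ MeasurableSpace.pi :=
  iSup₂_le fun i _ => measurable_iff_comap_le.mp (measurable_pi_apply i)

lemma pathSigma_mono {n m : ℕ} (h : n ≤ m) : pathSigma α n ≤ pathSigma α m :=
  iSup₂_le fun i hi => comap_eval_le_pathSigma (by have := Finset.mem_range.mp hi; omega)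

lemma measurable_eval_pathSigma {i n : ℕ} (h : i ≤ n) :
    Measurable[pathSigma α n] fun ω : ℕ → α => ω i :=
  fun t ht => comap_eval_le_pathSigma h _ ⟨t, ht, rfl⟩

lemma measurableSet_eval_pathSigma {i n : ℕ} (h : i ≤ n) {A : Set α} (hA : MeasurableSet A) :
    MeasurableSet[pathSigma α n] {ω : ℕ → α | ω i ∈ A} :=
  comap_eval_le_pathSigma h _ ⟨A, hA, rfl⟩

lemma pathSigma_zero : pathSigma α 0 = MeasurableSpace.comap (fun ω : ℕ → α => ω 0) mα := by
  refine le_antisymm (iSup₂_le fun i hi => ?_) (comap_eval_le_pathSigma le_rfl)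
  have : i = 0 := by have := Finset.mem_range.mp hi; omega
  subst this; exact le_rfl

lemma pathSigma_succ (n : ℕ) :
    pathSigma α (n+1) = pathSigma α n ⊔ MeasurableSpace.comap (fun ω : ℕ → α => ω (n+1)) mα := by
  refine le_antisymm (iSup₂_le fun i hi => ?_) (sup_le (pathSigma_mono (by omega))
    (comap_eval_le_pathSigma le_rfl))
  rcases Nat.lt_or_ge i (n+1) with h | h
  · exact le_trans (comap_eval_le_pathSigma (by omega)) le_sup_left
  · have : i = n + 1 := by have := Finset.mem_range.mp hi; omega
    subst this; exact le_sup_right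

/-- cylinder events: union of all the `pathSigma` σ-algebras. -/
def cylEvents (α : Type*) [MeasurableSpace α] : Set (Set (ℕ → α)) :=
  ⋃ n, {B | MeasurableSet[pathSigma α n] B}

lemma isPiSystem_cylEvents : IsPiSystem (cylEvents α) := by
  rintro s hs t ht -
  simp only [cylEvents, mem_iUnion, mem_setOf_eq] at hs ht ⊢
  obtain ⟨n, hn⟩ := hs; obtain ⟨m, hm⟩ := ht
  exact ⟨max n m, (pathSigma_mono (le_max_left n m) _ hn).inter
    (pathSigma_mono (le_max_right n m) _ hm)⟩

lemma pi_eq_generateFrom_cylEvents :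
    (MeasurableSpace.pi : MeasurableSpace (ℕ → α)) = MeasurableSpace.generateFrom (cylEvents α) := by
  refine le_antisymm ?_ ?_
  · refine iSup_le fun i B hB => ?_
    exact MeasurableSpace.measurableSet_generateFrom
      (mem_iUnion.mpr ⟨i, comap_eval_le_pathSigma (le_refl i) _ hB⟩)
  · refine MeasurableSpace.generateFrom_le fun B hB => ?_
    obtain ⟨n, hn⟩ := mem_iUnion.mp hB
    exact pathSigma_le n _ hn

/-- Uniqueness of Markov chain laws. -/
theorem markovLaw_unique [MeasurableSingletonClass α] (Q : Kernel α α)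
    (μ ν : Measure (ℕ → α)) [IsProbabilityMeasure μ] [IsProbabilityMeasure ν] (x : α)
    (hμ0 : μ {ω | ω 0 = x} = 1) (hν0 : ν {ω | ω 0 = x} = 1)
    (hμm : ∀ (n : ℕ) (B : Set (ℕ → α)), MeasurableSet[pathSigma α n] B →
      ∀ A : Set α, MeasurableSet A →
        μ (B ∩ {ω | ω (n + 1) ∈ A}) = ∫⁻ ω in B, Q (ω n) A ∂μ)
    (hνm : ∀ (n : ℕ) (B : Set (ℕ → α)), MeasurableSet[pathSigma α n] B →
      ∀ A : Set α, MeasurableSet A →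
        ν (B ∩ {ω | ω (n + 1) ∈ A}) = ∫⁻ ω in B, Q (ω n) A ∂ν) :
    μ = ν := by
  have hx : MeasurableSet {ω : ℕ → α | ω 0 = x} :=
    measurableSet_eval_pathSigma (le_refl 0) (measurableSet_singleton x) |> pathSigma_le 0 _
  have key : ∀ n (B : Set (ℕ → α)), MeasurableSet[pathSigma α n] B → μ B = ν B := by
    intro n
    induction n with
    | zero =>
      intro B hB
      rw [pathSigma_zero] at hB
      obtain ⟨A, hA, rfl⟩ := hB
      by_cases hxA : x ∈ A
      · have hsub : {ω : ℕ → α | ω 0 = x} ⊆ (fun ω : ℕ → α => ω 0) ⁻¹' A := by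
          intro ω hω; simp only [mem_setOf_eq] at hω; simp [Set.mem_preimage, hω, hxA]
        have h1 : μ ((fun ω : ℕ → α => ω 0) ⁻¹' A) = 1 :=
          le_antisymm prob_le_one (hμ0 ▸ measure_mono hsub)
        have h2 : ν ((fun ω : ℕ → α => ω 0) ⁻¹' A) = 1 :=
          le_antisymm prob_le_one (hν0 ▸ measure_mono hsub)
        rw [h1, h2]
      · have hsub : (fun ω : ℕ → α => ω 0) ⁻¹' A ⊆ {ω : ℕ → α | ω 0 = x}ᶜ := by
          intro ω hω hmem
          simp only [mem_setOf_eq] at hmem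
          exact hxA (hmem ▸ hω)
        have hc1 : μ {ω : ℕ → α | ω 0 = x}ᶜ = 0 := by
          rw [measure_compl hx (measure_ne_top μ _), hμ0, measure_univ]; simp
        have hc2 : ν {ω : ℕ → α | ω 0 = x}ᶜ = 0 := by
          rw [measure_compl hx (measure_ne_top ν _), hν0, measure_univ]; simp
        have h1 : μ ((fun ω : ℕ → α => ω 0) ⁻¹' A) = 0 :=
          le_antisymm (hc1 ▸ measure_mono hsub) zero_le
        have h2 : ν ((fun ω : ℕ → α => ω 0) ⁻¹' A) = 0 :=
          le_antisymm (hc2 ▸ measure_mono hsub) zero_le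
        rw [h1, h2]
    | succ n ih =>
      have htrim : μ.trim (pathSigma_le n) = ν.trim (pathSigma_le n) := by
        refine @Measure.ext _ (pathSigma α n) _ _ fun s hs => ?_
        rw [trim_measurableSet_eq _ hs, trim_measurableSet_eq _ hs]
        exact ih s hs
      set F : Set (Set (ℕ → α)) :=
        {B | ∃ B₀ A, MeasurableSet[pathSigma α n] B₀ ∧ MeasurableSet A ∧
          B = B₀ ∩ {ω | ω (n+1) ∈ A}} with hF
      have hgen : pathSigma α (n+1) = MeasurableSpace.generateFrom F := by
        rw [pathSigma_succ n]
        refine le_antisymm (sup_le ?_ ?_) (MeasurableSpace.generateFrom_le ?_)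
        · intro B hB
          refine MeasurableSpace.measurableSet_generateFrom ⟨B, univ, hB, MeasurableSet.univ, ?_⟩
          simp
        · rintro B ⟨A, hA, rfl⟩
          refine MeasurableSpace.measurableSet_generateFrom ⟨univ, A, MeasurableSet.univ, hA, ?_⟩
          simp only [univ_inter]; rfl
        · rintro B ⟨B₀, A, hB₀, hA, rfl⟩
          exact MeasurableSet.inter (le_sup_left (α := MeasurableSpace (ℕ → α)) _ hB₀)
            (le_sup_right (α := MeasurableSpace (ℕ → α)) _ ⟨A, hA, rfl⟩)
      have hpi : IsPiSystem F := by
        rintro s ⟨B₁, A₁, hB₁, hA₁, rfl⟩ t ⟨B₂, A₂, hB₂, hA₂, rfl⟩ -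
        refine ⟨B₁ ∩ B₂, A₁ ∩ A₂, hB₁.inter hB₂, hA₁.inter hA₂, ?_⟩
        ext ω; simp only [mem_inter_iff, mem_setOf_eq]; tauto
      have hbasic : ∀ B ∈ F, μ B = ν B := by
        rintro B ⟨B₀, A, hB₀, hA, rfl⟩
        rw [hμm n B₀ hB₀ A hA, hνm n B₀ hB₀ A hA]
        have hB₀pi : MeasurableSet B₀ := pathSigma_le n _ hB₀
        have hind : Measurable[pathSigma α n] (B₀.indicator fun ω => Q (ω n) A) :=
          Measurable.indicator ((Q.measurable_coe hA).comp (measurable_eval_pathSigma le_rfl)) hB₀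
        rw [← lintegral_indicator hB₀pi _, ← lintegral_indicator hB₀pi _,
          ← lintegral_trim (pathSigma_le n) hind, ← lintegral_trim (pathSigma_le n) hind, htrim]
      intro B hB
      refine @MeasurableSpace.induction_on_inter (ℕ → α) (pathSigma α (n+1))
        (fun B _ => μ B = ν B) F hgen hpi (by simp) hbasic ?_ ?_ B hB
      · intro t ht h
        have htpi : MeasurableSet t := pathSigma_le (n+1) _ ht
        rw [measure_compl htpi (measure_ne_top μ _), measure_compl htpi (measure_ne_top ν _),
          measure_univ, measure_univ, h]
      · intro f hdisj hmeas hC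
        have hfpi : ∀ i, MeasurableSet (f i) := fun i => pathSigma_le (n+1) _ (hmeas i)
        rw [measure_iUnion hdisj hfpi, measure_iUnion hdisj hfpi]
        exact tsum_congr hC
  refine ext_of_generate_finite (cylEvents α) pi_eq_generateFrom_cylEvents isPiSystem_cylEvents
    ?_ (by rw [measure_univ, measure_univ])
  intro s hs
  obtain ⟨n, hn⟩ := mem_iUnion.mp hs
  exact key n s hn

end PathSigma

section HitTimes
variable {α : Type*} [mα : MeasurableSpace α]

open Classical in
lemma sInfP_eq_top {P : ℕ → Prop} :
    sInf {n : ℕ∞ | ∃ t : ℕ, n = (t : ℕ∞) ∧ P t} = ⊤ ↔ ∀ t, ¬ P t := by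
  constructor
  · intro h t ht
    have h1 : sInf {n : ℕ∞ | ∃ t : ℕ, n = (t : ℕ∞) ∧ P t} ≤ (t : ℕ∞) :=
      sInf_le ⟨t, rfl, ht⟩
    rw [h] at h1
    exact ENat.coe_ne_top t (le_antisymm le_top h1)
  · intro h
    rw [sInf_eq_top]
    rintro a ⟨t, rfl, ht⟩
    exact absurd ht (h t)

open Classical in
lemma sInfP_eq_coe {P : ℕ → Prop} {t : ℕ} :
    sInf {n : ℕ∞ | ∃ t : ℕ, n = (t : ℕ∞) ∧ P t} = (t : ℕ∞) ↔
      (P t ∧ ∀ s, s < t → ¬ P s) := by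
  constructor
  · intro h
    have hne : ∃ s, P s := by
      by_contra hc
      push_neg at hc
      rw [sInfP_eq_top.mpr hc] at h
      exact (ENat.coe_ne_top t) h.symm
    have hfind : sInf {n : ℕ∞ | ∃ t : ℕ, n = (t : ℕ∞) ∧ P t} = (Nat.find hne : ℕ∞) := by
      refine le_antisymm (sInf_le ⟨Nat.find hne, rfl, Nat.find_spec hne⟩) (le_sInf ?_)
      rintro a ⟨s, rfl, hs⟩
      exact_mod_cast Nat.find_le hs
    rw [hfind] at h
    have ht : t = Nat.find hne := by exact_mod_cast h.symm
    subst ht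
    exact ⟨Nat.find_spec hne, fun s hs => Nat.find_min hne hs⟩
  · rintro ⟨h1, h2⟩
    refine le_antisymm (sInf_le ⟨t, rfl, h1⟩) (le_sInf ?_)
    rintro a ⟨s, rfl, hs⟩
    have : t ≤ s := by by_contra hc; push_neg at hc; exact h2 s hc hs
    exact_mod_cast this

lemma measurable_sInfP {P : ℕ → (ℕ → α) → Prop}
    (hP : ∀ t, MeasurableSet {ω : ℕ → α | P t ω}) :
    Measurable fun ω : ℕ → α => sInf {n : ℕ∞ | ∃ t : ℕ, n = (t : ℕ∞) ∧ P t ω} := by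
  refine measurable_to_countable' fun y => ?_
  induction y using ENat.recTopCoe with
  | top =>
    have : (fun ω : ℕ → α => sInf {n : ℕ∞ | ∃ t : ℕ, n = (t : ℕ∞) ∧ P t ω}) ⁻¹' {⊤}
        = ⋂ t, {ω : ℕ → α | P t ω}ᶜ := by
      ext ω
      simp only [mem_preimage, mem_singleton_iff, sInfP_eq_top, mem_iInter, mem_compl_iff,
        mem_setOf_eq]
    rw [this]
    exact MeasurableSet.iInter fun t => (hP t).compl
  | coe t =>
    have : (fun ω : ℕ → α => sInf {n : ℕ∞ | ∃ t : ℕ, n = (t : ℕ∞) ∧ P t ω}) ⁻¹' {(t : ℕ∞)}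
        = {ω : ℕ → α | P t ω} ∩ ⋂ (s : ℕ), ⋂ (_ : s < t), {ω : ℕ → α | P s ω}ᶜ := by
      ext ω
      simp only [mem_preimage, mem_singleton_iff, sInfP_eq_coe, mem_inter_iff, mem_iInter,
        mem_compl_iff, mem_setOf_eq]
    rw [this]
    exact (hP t).inter (MeasurableSet.iInter fun s => MeasurableSet.iInter fun _ => (hP s).compl)

omit mα in
lemma hitTime_eq_sInfP (S : Set α) (ω : ℕ → α) :
    hitTime S ω = sInf {n : ℕ∞ | ∃ t : ℕ, n = (t : ℕ∞) ∧ (1 ≤ t ∧ ω t ∈ S)} := rfl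

lemma walkHit_eq_sInfP (ω : ℕ → ℤ) :
    walkHit ω = sInf {n : ℕ∞ | ∃ t : ℕ, n = (t : ℕ∞) ∧ ω t = 0} := rfl

lemma measurable_hitTime {S : Set α} (hS : MeasurableSet S) : Measurable (hitTime S) := by
  have := measurable_sInfP (α := α) (P := fun t ω => 1 ≤ t ∧ ω t ∈ S) (fun t => ?_)
  · exact this
  · by_cases ht : 1 ≤ t
    · have : {ω : ℕ → α | 1 ≤ t ∧ ω t ∈ S} = (fun ω : ℕ → α => ω t) ⁻¹' S := by
        ext ω; simp [ht]
      rw [this]; exact (measurable_pi_apply t) hS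
    · have : {ω : ℕ → α | 1 ≤ t ∧ ω t ∈ S} = ∅ := by ext ω; simp [ht]
      rw [this]; exact MeasurableSet.empty

lemma measurable_walkHit : Measurable walkHit := by
  refine measurable_sInfP (P := fun t (ω : ℕ → ℤ) => ω t = 0) (fun t => ?_)
  have : {ω : ℕ → ℤ | ω t = 0} = (fun ω : ℕ → ℤ => ω t) ⁻¹' {0} := rfl
  rw [this]; exact (measurable_pi_apply t) (measurableSet_singleton (0 : ℤ))

lemma measurable_stopPayoff {δ : ℕ → ℝ} {f : α → ℝ} {S : Set α}
    (hf : Measurable f) (hS : MeasurableSet S) : Measurable (stopPayoff δ f S) := by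
  have hg : Measurable (fun q : (ℕ → α) × ℕ∞ =>
      if q.2 = ⊤ then (0:ℝ) else δ q.2.toNat * f (q.1 q.2.toNat)) := by
    refine measurable_from_prod_countable_left fun y => ?_
    induction y using ENat.recTopCoe with
    | top => simp only [if_pos rfl]; exact measurable_const
    | coe t =>
      simp only [if_neg (ENat.coe_ne_top t)]
      exact measurable_const.mul (hf.comp (measurable_pi_apply _))
  exact hg.comp (measurable_id.prodMk (measurable_hitTime hS))

lemma measurable_walkDisc (β : ℝ) (s : ℕ) : Measurable (walkDisc β s) := by
  have hh : Measurable (fun n : ℕ∞ =>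
      if n = ⊤ then (0:ℝ) else 1 / (1 + β * (n.toNat + s))) := Measurable.of_discrete
  exact hh.comp measurable_walkHit

lemma measurableSet_preimage_pathSigma {β : Type*} [mβ : MeasurableSpace β]
    (Φ : (ℕ → α) → ℕ → β) (n m : ℕ)
    (h : ∀ i, i ≤ n → Measurable[pathSigma α m] fun ω => Φ ω i)
    {B : Set (ℕ → β)} (hB : MeasurableSet[pathSigma β n] B) :
    MeasurableSet[pathSigma α m] (Φ ⁻¹' B) := by
  have hle : MeasurableSpace.comap Φ (pathSigma β n) ≤ pathSigma α m := by
    rw [pathSigma, MeasurableSpace.comap_iSup]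
    refine iSup_le fun i => ?_
    rw [MeasurableSpace.comap_iSup]
    refine iSup_le fun hi => ?_
    rw [MeasurableSpace.comap_comp]
    have : ((fun ω : ℕ → β => ω i) ∘ Φ) = fun ω => Φ ω i := rfl
    rw [this]
    exact measurable_iff_comap_le.mp (h i (by
      have := Finset.mem_range.mp hi; omega))
  exact hle _ ⟨B, hB, rfl⟩

lemma measurableSet_coordEq {γ : Type*} [MeasurableSpace γ] [MeasurableSingletonClass γ]
    (i : ℕ) (k : γ) : MeasurableSet {ω : ℕ → γ | ω i = k} := by
  have : {ω : ℕ → γ | ω i = k} = (fun ω : ℕ → γ => ω i) ⁻¹' {k} := by ext; simp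
  rw [this]; exact (measurable_pi_apply i) (measurableSet_singleton k)

lemma measurableSet_coordMem {γ : Type*} [MeasurableSpace γ] (i : ℕ) {A : Set γ}
    (hA : MeasurableSet A) : MeasurableSet {ω : ℕ → γ | ω i ∈ A} :=
  (measurable_pi_apply i) hA

lemma measure_inter_ae {γ : Type*} [MeasurableSpace γ] {μ : Measure γ} [IsProbabilityMeasure μ]
    {F : Set γ} (hFm : MeasurableSet F) (hF : μ F = 1) (E : Set γ) : μ (E ∩ F) = μ E :=
  measure_inter_conull ((prob_compl_eq_zero_iff hFm).mpr hF)

end HitTimes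

section Walk
variable {p : ℝ} {PrY : Kernel ℤ (ℕ → ℤ)} [IsMarkovKernel PrY]
  {QY : Kernel ℤ ℤ} [IsMarkovKernel QY]

lemma walk_step (hwalk : IsMarkovChainLaw PrY QY) (x k : ℤ) (n : ℕ) (A : Set ℤ) :
    PrY x ({ω : ℕ → ℤ | ω n = k} ∩ {ω | ω (n+1) ∈ A})
      = PrY x {ω : ℕ → ℤ | ω n = k} * QY k A := by
  have hB : MeasurableSet[pathSigma ℤ n] {ω : ℕ → ℤ | ω n = k} := by
    have : {ω : ℕ → ℤ | ω n = k} = {ω : ℕ → ℤ | ω n ∈ ({k} : Set ℤ)} := by ext; simp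
    rw [this]; exact measurableSet_eval_pathSigma le_rfl (measurableSet_singleton k)
  rw [hwalk.markov x n _ hB A .of_discrete]
  rw [setLIntegral_congr_fun (pathSigma_le n _ hB)
    (fun ω (hω : ω n = k) => by rw [hω])]
  rw [setLIntegral_const, mul_comm]

lemma walk_first (hwalk : IsMarkovChainLaw PrY QY) (x : ℤ) (A : Set ℤ) :
    PrY x {ω : ℕ → ℤ | ω 1 ∈ A} = QY x A := by
  have h0 : PrY x {ω : ℕ → ℤ | ω 0 = x} = 1 := hwalk.start x
  have hm : MeasurableSet {ω : ℕ → ℤ | ω 0 = x} := measurableSet_coordEq 0 x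
  have := walk_step hwalk x x 0 A
  rwa [h0, one_mul, inter_comm, measure_inter_ae hm h0] at this

open Classical in
lemma QY_apply
    (hQY : ∀ n : ℤ, QY n = ENNReal.ofReal p • Measure.dirac (n + 1)
      + ENNReal.ofReal (1 - p) • Measure.dirac (n - 1)) (k : ℤ) (A : Set ℤ) :
    QY k A = (if k+1 ∈ A then ENNReal.ofReal p else 0)
      + (if k-1 ∈ A then ENNReal.ofReal (1-p) else 0) := by
  rw [hQY k]
  classical
  simp only [Measure.coe_add, Measure.coe_smul, Pi.add_apply, Pi.smul_apply,
    Measure.dirac_apply, smul_eq_mul, Set.indicator_apply, Pi.one_apply,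
    mul_ite, mul_one, mul_zero]

/-- the nearest neighbour event -/
def NNset : Set (ℕ → ℤ) := {ω | ∀ t, ω (t+1) = ω t + 1 ∨ ω (t+1) = ω t - 1}

lemma NNset_meas : MeasurableSet NNset := by
  have : NNset = ⋂ t, {ω : ℕ → ℤ | ω (t+1) = ω t + 1 ∨ ω (t+1) = ω t - 1} := by
    ext ω; simp [NNset]
  rw [this]
  refine MeasurableSet.iInter fun t => ?_
  have : {ω : ℕ → ℤ | ω (t+1) = ω t + 1 ∨ ω (t+1) = ω t - 1}
      = (fun ω : ℕ → ℤ => (ω t, ω (t+1))) ⁻¹' {q : ℤ × ℤ | q.2 = q.1 + 1 ∨ q.2 = q.1 - 1} := by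
    ext ω; simp
  rw [this]
  exact ((measurable_pi_apply t).prodMk (measurable_pi_apply (t+1))) .of_discrete

lemma NNset_ae (hwalk : IsMarkovChainLaw PrY QY)
    (hQY : ∀ n : ℤ, QY n = ENNReal.ofReal p • Measure.dirac (n + 1)
      + ENNReal.ofReal (1 - p) • Measure.dirac (n - 1)) (x : ℤ) :
    PrY x NNset = 1 := by
  rw [← prob_compl_eq_zero_iff NNset_meas]
  have hsub : NNsetᶜ ⊆ ⋃ (t : ℕ), ⋃ (k : ℤ),
      ({ω : ℕ → ℤ | ω t = k} ∩ {ω | ω (t+1) ∈ ({k+1, k-1} : Set ℤ)ᶜ}) := by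
    intro ω hω
    simp only [NNset, mem_compl_iff, mem_setOf_eq, not_forall] at hω
    obtain ⟨t, ht⟩ := hω
    push_neg at ht
    refine mem_iUnion.mpr ⟨t, mem_iUnion.mpr ⟨ω t, ⟨rfl, ?_⟩⟩⟩
    simp only [mem_compl_iff, mem_insert_iff, mem_singleton_iff, mem_setOf_eq]
    tauto
  refine le_antisymm (le_trans (measure_mono hsub) (le_of_eq ?_)) zero_le
  refine measure_iUnion_null fun t => measure_iUnion_null fun k => ?_
  rw [walk_step hwalk x k t _, QY_apply hQY]
  have h1 : (k:ℤ)+1 ∉ ({k+1, k-1} : Set ℤ)ᶜ := by simp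
  have h2 : (k:ℤ)-1 ∉ ({k+1, k-1} : Set ℤ)ᶜ := by simp
  rw [if_neg h1, if_neg h2]
  simp

/-- the shift map -/
def shiftW : (ℕ → ℤ) → ℕ → ℤ := fun ω t => ω (t+1)

lemma measurable_shiftW : Measurable shiftW :=
  measurable_pi_lambda _ fun t => measurable_pi_apply (t+1)

lemma shift_law (hwalk : IsMarkovChainLaw PrY QY)
    (hQY : ∀ n : ℤ, QY n = ENNReal.ofReal p • Measure.dirac (n + 1)
      + ENNReal.ofReal (1 - p) • Measure.dirac (n - 1))
    (hp0 : 0 < p) :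
    ((PrY 0 : Measure (ℕ → ℤ)).restrict {ω : ℕ → ℤ | ω 1 = 1}).map shiftW
      = ENNReal.ofReal p • (PrY 1 : Measure (ℕ → ℤ)) := by
  set T : Set (ℕ → ℤ) := {ω : ℕ → ℤ | ω 1 = 1} with hT
  have hTm : MeasurableSet T := measurableSet_coordEq 1 1
  have hTval : PrY 0 T = ENNReal.ofReal p := by
    have : T = {ω : ℕ → ℤ | ω 1 ∈ ({1} : Set ℤ)} := by ext; simp [hT]
    rw [this, walk_first hwalk, QY_apply hQY]
    norm_num
  have hcne : ENNReal.ofReal p ≠ 0 := by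
    simp [ENNReal.ofReal_eq_zero, not_le, hp0]
  have hcnt : ENNReal.ofReal p ≠ ⊤ := ENNReal.ofReal_ne_top
  set μ' : Measure (ℕ → ℤ) := (ENNReal.ofReal p)⁻¹ • (((PrY 0 : Measure (ℕ → ℤ)).restrict T).map shiftW) with hμ'
  have happ : ∀ E : Set (ℕ → ℤ), MeasurableSet E →
      μ' E = (ENNReal.ofReal p)⁻¹ * PrY 0 (shiftW ⁻¹' E ∩ T) := by
    intro E hE
    rw [hμ', Measure.smul_apply, Measure.map_apply measurable_shiftW hE,
      Measure.restrict_apply (measurable_shiftW hE), smul_eq_mul]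
  have hμ'prob : IsProbabilityMeasure μ' := by
    constructor
    rw [happ univ MeasurableSet.univ]
    rw [Set.preimage_univ, Set.univ_inter, hTval, ENNReal.inv_mul_cancel hcne hcnt]
  suffices hsuff : μ' = PrY 1 by
    rw [← hsuff, hμ', smul_smul, ENNReal.mul_inv_cancel hcne hcnt, one_smul]
  refine markovLaw_unique QY μ' (PrY 1) 1 ?_ (hwalk.start 1) ?_ (hwalk.markov 1)
  · have hpre : shiftW ⁻¹' {ω : ℕ → ℤ | ω 0 = 1} = T := rfl
    rw [happ _ (measurableSet_coordEq 0 1), hpre, inter_self,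
      hTval, ENNReal.inv_mul_cancel hcne hcnt]
  · intro n B hB A hA
    have hBpi : MeasurableSet B := pathSigma_le n _ hB
    have hpre : MeasurableSet[pathSigma ℤ (n+1)] (shiftW ⁻¹' B) :=
      measurableSet_preimage_pathSigma shiftW n (n+1)
        (fun i hi => measurable_eval_pathSigma (by omega)) hB
    have hprepi : MeasurableSet (shiftW ⁻¹' B) := pathSigma_le (n+1) _ hpre
    have hTn1 : MeasurableSet[pathSigma ℤ (n+1)] T := by
      have : T = {ω : ℕ → ℤ | ω 1 ∈ ({1} : Set ℤ)} := by ext; simp [hT]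
      rw [this]; exact measurableSet_eval_pathSigma (by omega) (measurableSet_singleton 1)
    have hAn1 : MeasurableSet {ω : ℕ → ℤ | ω (n+1) ∈ A} :=
      measurableSet_coordMem (n+1) (MeasurableSet.of_discrete (s := A))
    -- LHS
    have hsetEq : shiftW ⁻¹' (B ∩ {ω : ℕ → ℤ | ω (n+1) ∈ A}) ∩ T
        = (shiftW ⁻¹' B ∩ T) ∩ {ω : ℕ → ℤ | ω (n+2) ∈ A} := by
      ext ω
      simp only [mem_inter_iff, mem_preimage, mem_setOf_eq, shiftW, hT]
      tauto
    have hLHS : μ' (B ∩ {ω : ℕ → ℤ | ω (n+1) ∈ A})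
        = (ENNReal.ofReal p)⁻¹ *
          ∫⁻ ω in (shiftW ⁻¹' B ∩ T), QY (ω (n+1)) A ∂(PrY 0) := by
      rw [happ _ (hBpi.inter hAn1), hsetEq,
        hwalk.markov 0 (n+1) _ (hpre.inter hTn1) A .of_discrete]
    rw [hLHS]
    -- RHS
    have hfmeas : Measurable fun ω : ℕ → ℤ => QY (ω n) A :=
      (QY.measurable_coe .of_discrete).comp (measurable_pi_apply n)
    rw [hμ', Measure.restrict_smul, lintegral_smul_measure]
    congr 1
    rw [setLIntegral_map hBpi hfmeas measurable_shiftW, Measure.restrict_restrict hprepi]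
    rfl
end Walk

end BinAux

open BinAux in
set_option maxHeartbeats 1000000 in
/-- In the binomial model, if `S = (0,y] ∩ 𝕏` is an equilibrium with `y ∈ S ∩ (0,K)`,
then `y ≤ U·K` with `U = (1 − (1−p)/(1+β) − p α') / (1 − (1−p)/(u(1+β)) − p α')`. -/
theorem binomial_equilibrium_upper_bound
    (u p β K : ℝ) (hu : 1 < u) (hp_lb : 1 / (u + 1) ≤ p) (hp_ub : p < 1)
    (hβ : 0 < β) (hK : 0 < K)
    (Pr : Kernel ℝ (ℕ → ℝ)) [IsMarkovKernel Pr] (Q : Kernel ℝ ℝ) [IsMarkovKernel Q]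
    (hchain : IsMarkovChainLaw Pr Q)
    (hQ : ∀ x : ℝ, Q x = ENNReal.ofReal p • Measure.dirac (u * x)
      + ENNReal.ofReal (1 - p) • Measure.dirac (x / u))
    (PrY : Kernel ℤ (ℕ → ℤ)) [IsMarkovKernel PrY] (QY : Kernel ℤ ℤ) [IsMarkovKernel QY]
    (hwalk : IsMarkovChainLaw PrY QY)
    (hQY : ∀ n : ℤ, QY n = ENNReal.ofReal p • Measure.dirac (n + 1)
      + ENNReal.ofReal (1 - p) • Measure.dirac (n - 1))
    (y : ℝ) (hy_mem : y ∈ binGrid u) (hy_pos : 0 < y) (hyK : y < K)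
    (hS : ΘBin Pr u β K (Set.Ioc 0 y ∩ binGrid u) = Set.Ioc 0 y ∩ binGrid u) :
    y ≤ ((1 - (1 - p) / (1 + β) - p * alphaWalk' PrY β) /
      (1 - (1 - p) / (u * (1 + β)) - p * alphaWalk' PrY β)) * K := by
  -- basic facts
  have hu0 : (0:ℝ) < u := lt_trans one_pos hu
  have hu0' : u ≠ 0 := ne_of_gt hu0
  have hp0 : 0 < p := lt_of_lt_of_le (by positivity) hp_lb
  have h1p : 0 < 1 - p := by linarith
  have hβ1 : (0:ℝ) < 1 + β := by linarith
  set S : Set ℝ := Set.Ioc 0 y ∩ binGrid u with hSdef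
  set α' : ℝ := alphaWalk' PrY β with hα'
  -- grid measurable
  have hGridc : (binGrid u).Countable := by
    have : binGrid u = Set.range (fun i : ℤ => u ^ i) := by
      ext x; simp [binGrid, Set.mem_range, eq_comm]
    rw [this]; exact Set.countable_range _
  have hSmeas : MeasurableSet S := measurableSet_Ioc.inter hGridc.measurableSet
  have hf : Measurable (binPay K) :=
    ((continuous_const.sub continuous_id).max continuous_const).measurable
  -- from the equilibrium property at y
  have hJy : valJ Pr (binDisc β) (binPay K) S y ≤ K - y := by
    have hy_in : y ∈ S := ⟨⟨hy_pos, le_refl y⟩, hy_mem⟩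
    rw [← hS] at hy_in
    have := hy_in.2
    rwa [show binPay K y = K - y by rw [binPay]; exact max_eq_left (by linarith)] at this
  -- membership characterization on the grid
  obtain ⟨j, hj⟩ := hy_mem
  have hmem : ∀ m : ℤ, (y * u ^ m ∈ S) ↔ m ≤ 0 := by
    intro m
    constructor
    · rintro ⟨⟨-, hle⟩, -⟩
      have h1 : u ^ m ≤ 1 := (mul_le_iff_le_one_right hy_pos).mp hle
      have := (zpow_le_zpow_iff_right₀ hu (m := m) (n := 0)).mp (by rwa [zpow_zero])
      exact this
    · intro hm
      refine ⟨⟨mul_pos hy_pos (zpow_pos hu0 m), ?_⟩, ⟨j + m, by rw [hj, ← zpow_add₀ hu0']⟩⟩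
      have h1 : u ^ m ≤ 1 := by
        rw [← zpow_zero u]; exact (zpow_le_zpow_iff_right₀ hu).mpr hm
      calc y * u ^ m ≤ y * 1 := by nlinarith
        _ = y := mul_one y
  -- the path map
  set φ : (ℕ → ℤ) → ℕ → ℝ := fun ω t => y * u ^ (ω t) with hφ
  have hφm : Measurable φ :=
    measurable_pi_lambda _ fun t => (Measurable.of_discrete (f := fun k : ℤ => y * u ^ k)).comp (measurable_pi_apply t)
  -- pushforward law
  have key1 : (PrY 0 : Measure (ℕ → ℤ)).map φ = Pr y := by
    have hprob : IsProbabilityMeasure ((PrY 0 : Measure (ℕ → ℤ)).map φ) :=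
      Measure.isProbabilityMeasure_map hφm.aemeasurable
    refine markovLaw_unique Q _ _ y ?_ (hchain.start y) ?_ (hchain.markov y)
    · have hEm : MeasurableSet {ω : ℕ → ℝ | ω 0 = y} := measurableSet_coordEq 0 y
      rw [Measure.map_apply hφm hEm]
      have hsub : {ω : ℕ → ℤ | ω 0 = 0} ⊆ φ ⁻¹' {ω : ℕ → ℝ | ω 0 = y} := by
        intro ω hω
        simp only [Set.mem_setOf_eq] at hω
        simp only [Set.mem_preimage, Set.mem_setOf_eq, hφ, hω, zpow_zero, mul_one]
      exact le_antisymm prob_le_one ((hwalk.start 0) ▸ measure_mono hsub)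
    · intro n B hB A hA
      have hBpi : MeasurableSet B := pathSigma_le n _ hB
      have hpre : MeasurableSet[pathSigma ℤ n] (φ ⁻¹' B) :=
        measurableSet_preimage_pathSigma φ n n
          (fun i hi => (Measurable.of_discrete (f := fun k : ℤ => y * u ^ k)).comp (measurable_eval_pathSigma hi)) hB
      have hprepi : MeasurableSet (φ ⁻¹' B) := pathSigma_le n _ hpre
      set A' : Set ℤ := (fun k : ℤ => y * u ^ k) ⁻¹' A with hA'
      have hAn1 : MeasurableSet {ω : ℕ → ℝ | ω (n+1) ∈ A} := measurableSet_coordMem (n+1) hA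
      have hsetEq : φ ⁻¹' (B ∩ {ω : ℕ → ℝ | ω (n+1) ∈ A})
          = φ ⁻¹' B ∩ {ω : ℕ → ℤ | ω (n+1) ∈ A'} := rfl
      rw [Measure.map_apply hφm (hBpi.inter hAn1), hsetEq,
        hwalk.markov 0 n _ hpre A' .of_discrete]
      have hfmeas : Measurable fun ω : ℕ → ℝ => Q (ω n) A :=
        (Q.measurable_coe hA).comp (measurable_pi_apply n)
      rw [setLIntegral_map hBpi hfmeas hφm]
      refine setLIntegral_congr_fun hprepi (fun ω _ => ?_)
      have hkey : ∀ k : ℤ, QY k A' = Q (y * u ^ k) A := by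
        intro k
        rw [hQY k, hQ (y * u ^ k)]
        have e1 : u * (y * u ^ k) = y * u ^ (k + 1) := by
          rw [zpow_add_one₀ hu0']; ring
        have e2 : y * u ^ k / u = y * u ^ (k - 1) := by
          rw [zpow_sub_one₀ hu0']; field_simp
        simp only [Measure.coe_add, Measure.coe_smul, Pi.add_apply, Pi.smul_apply,
          Measure.dirac_apply' _ hA, Measure.dirac_apply, smul_eq_mul,
          Set.indicator_apply, Pi.one_apply, mul_ite, mul_one, mul_zero]
        rw [e1, e2]
        have hi1 : ((fun k : ℤ => y * u ^ k) ⁻¹' A).indicator (1 : ℤ → ℝ≥0∞) (k + 1)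
            = A.indicator (1 : ℝ → ℝ≥0∞) (y * u ^ (k+1)) := by
          by_cases hmemA : y * u ^ (k+1) ∈ A
          · rw [Set.indicator_of_mem hmemA, Set.indicator_of_mem (by exact hmemA)]; rfl
          · rw [Set.indicator_of_notMem hmemA, Set.indicator_of_notMem (by exact hmemA)]
        have hi2 : ((fun k : ℤ => y * u ^ k) ⁻¹' A).indicator (1 : ℤ → ℝ≥0∞) (k - 1)
            = A.indicator (1 : ℝ → ℝ≥0∞) (y * u ^ (k-1)) := by
          by_cases hmemA : y * u ^ (k-1) ∈ A
          · rw [Set.indicator_of_mem hmemA, Set.indicator_of_mem (by exact hmemA)]; rfl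
          · rw [Set.indicator_of_notMem hmemA, Set.indicator_of_notMem (by exact hmemA)]
        rw [hA', hi1, hi2]
      have hφn : φ ω n = y * u ^ (ω n) := rfl
      rw [hφn]
      exact hkey (ω n)
  -- good event
  set G : Set (ℕ → ℤ) := {ω : ℕ → ℤ | ω 0 = 0} ∩ NNset with hG
  have hGm : MeasurableSet G := (measurableSet_coordEq 0 0).inter NNset_meas
  have hG1 : PrY 0 G = 1 := by
    rw [hG, Set.inter_comm, measure_inter_ae (measurableSet_coordEq 0 0) (hwalk.start 0) NNset]
    exact NNset_ae hwalk hQY 0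
  have hGae : ∀ᵐ ω ∂(PrY 0 : Measure (ℕ → ℤ)), ω ∈ G :=
    mem_ae_iff.mpr ((prob_compl_eq_zero_iff hGm).mpr hG1)
  -- positivity along paths before hitting zero
  have hpos : ∀ ω : ℕ → ℤ, ω ∈ G → ω 1 = 1 →
      ∀ t, 1 ≤ t → (∀ s, 1 ≤ s → s ≤ t → ω s ≠ 0) → 1 ≤ ω t := by
    rintro ω ⟨-, hNN⟩ hω1 t
    induction t with
    | zero => exact fun h _ => absurd h (by omega)
    | succ t ih =>
      intro _ hno
      by_cases ht : t = 0
      · subst ht; exact le_of_eq hω1.symm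
      · have h1t : 1 ≤ t := by omega
        have hωt : 1 ≤ ω t := ih h1t (fun s hs hst => hno s hs (by omega))
        have := hNN t
        have hne : ω (t+1) ≠ 0 := hno (t+1) (by omega) le_rfl
        omega
  -- pointwise payoff identity on {ω 1 = -1}
  have hP1 : ∀ ω : ℕ → ℤ, ω ∈ G → ω 1 = -1 →
      stopPayoff (binDisc β) (binPay K) S (φ ω) = (K - y/u) / (1+β) := by
    intro ω hωG hω1
    have hhit : hitTime S (φ ω) = (1 : ℕ) := by
      rw [hitTime_eq_sInfP, sInfP_eq_coe]
      refine ⟨⟨le_rfl, ?_⟩, fun s hs => by omega⟩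
      show y * u ^ (ω 1) ∈ S
      rw [hmem]; omega
    rw [stopPayoff, hhit]
    simp only [ENat.toNat_coe]
    rw [if_neg (by simp)]
    have hφ1 : φ ω 1 = y / u := by
      rw [hφ]; simp only [hω1, zpow_neg_one]; rw [div_eq_mul_inv]
    rw [hφ1, binDisc, binPay]
    have hyu : y / u ≤ y := div_le_self hy_pos.le hu.le
    rw [max_eq_left (by linarith)]
    push_cast
    rw [mul_one]
    ring
  -- pointwise payoff identity on {ω 1 = 1}
  have hP2 : ∀ ω : ℕ → ℤ, ω ∈ G → ω 1 = 1 →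
      stopPayoff (binDisc β) (binPay K) S (φ ω) = (K - y) * walkDisc β 1 (shiftW ω) := by
    intro ω hωG hω1
    rcases eq_or_ne (walkHit (shiftW ω)) ⊤ with htop | hfin
    · -- never hits zero
      have hnz : ∀ s : ℕ, shiftW ω s ≠ 0 := by
        rw [walkHit_eq_sInfP, sInfP_eq_top] at htop
        exact htop
      have hhit : hitTime S (φ ω) = ⊤ := by
        rw [hitTime_eq_sInfP, sInfP_eq_top]
        rintro t ⟨h1t, hmemS⟩
        have : (ω t : ℤ) ≤ 0 := (hmem (ω t)).mp hmemS
        have : 1 ≤ ω t := hpos ω hωG hω1 t h1t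
          (fun s hs hst => by
            have := hnz (s - 1)
            have hss : s - 1 + 1 = s := by omega
            rw [shiftW, hss] at this
            exact this)
        omega
      rw [stopPayoff, if_pos hhit, walkDisc, if_pos htop, mul_zero]
    · -- hits zero
      set s : ℕ := (walkHit (shiftW ω)).toNat with hsdef
      have hs : (s : ℕ∞) = walkHit (shiftW ω) := ENat.coe_toNat hfin
      have hs' : walkHit (shiftW ω) = (s : ℕ∞) := hs.symm
      rw [walkHit_eq_sInfP, sInfP_eq_coe] at hs'
      obtain ⟨hzero, hminW⟩ := hs'
      have hnz : ∀ r, 1 ≤ r → r ≤ s → ω r ≠ 0 := by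
        intro r h1r hrs hr0
        rcases Nat.lt_or_ge (r-1) s with h | h
        · exact hminW (r-1) h (by rw [shiftW, show r - 1 + 1 = r by omega]; exact hr0)
        · omega
      have hhit : hitTime S (φ ω) = ((s+1 : ℕ) : ℕ∞) := by
        rw [hitTime_eq_sInfP, sInfP_eq_coe]
        constructor
        · refine ⟨by omega, ?_⟩
          show y * u ^ (ω (s+1)) ∈ S
          rw [hmem]
          have : ω (s+1) = 0 := by
            have := hzero; rwa [shiftW] at this
          omega
        · rintro r hr ⟨h1r, hmemS⟩
          have hle : (ω r : ℤ) ≤ 0 := (hmem (ω r)).mp hmemS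
          have : 1 ≤ ω r := hpos ω hωG hω1 r h1r (fun s' hs' hsr => hnz s' hs' (by omega))
          omega
      have hω0 : ω (s+1) = 0 := by have := hzero; rwa [shiftW] at this
      rw [stopPayoff, hhit]
      rw [if_neg (ENat.coe_ne_top (s+1))]
      simp only [ENat.toNat_coe]
      have hφs : φ ω (s+1) = y := by rw [hφ]; simp [hω0]
      rw [hφs, binDisc, binPay, max_eq_left (by linarith)]
      rw [walkDisc, if_neg hfin, ← hs]
      simp only [ENat.toNat_coe]
      push_cast
      ring
  -- measurability and integrability
  have hsp_meas : Measurable (stopPayoff (binDisc β) (binPay K) S) :=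
    measurable_stopPayoff hf hSmeas
  have hgm : Measurable (fun ω : ℕ → ℤ => stopPayoff (binDisc β) (binPay K) S (φ ω)) :=
    hsp_meas.comp hφm
  have hbound : ∀ ω : ℕ → ℤ, ‖stopPayoff (binDisc β) (binPay K) S (φ ω)‖ ≤ K := by
    intro ω
    rw [stopPayoff]
    split_ifs with h
    · simp; linarith
    · set t := (hitTime S (φ ω)).toNat
      have hδ0 : 0 ≤ binDisc β t := by
        rw [binDisc]; positivity
      have hδ1 : binDisc β t ≤ 1 := by
        rw [binDisc]
        rw [div_le_one (by positivity)]
        have : (0:ℝ) ≤ β * t := by positivity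
        linarith
      have hx0 : 0 < φ ω t := mul_pos hy_pos (zpow_pos hu0 _)
      have hf0 : 0 ≤ binPay K (φ ω t) := le_max_right _ _
      have hfK : binPay K (φ ω t) ≤ K := by
        rw [binPay]
        refine max_le (by linarith) (by linarith)
      rw [Real.norm_eq_abs, abs_mul, abs_of_nonneg hδ0, abs_of_nonneg hf0]
      calc binDisc β t * binPay K (φ ω t) ≤ 1 * K := by
            exact mul_le_mul hδ1 hfK hf0 zero_le_one
        _ = K := one_mul K
  have hint : Integrable (fun ω : ℕ → ℤ => stopPayoff (binDisc β) (binPay K) S (φ ω))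
      (PrY 0 : Measure (ℕ → ℤ)) :=
    Integrable.mono' (integrable_const K) hgm.aestronglyMeasurable
      (Filter.Eventually.of_forall hbound)
  -- the value as an integral over the walk
  have hval : valJ Pr (binDisc β) (binPay K) S y
      = ∫ ω, stopPayoff (binDisc β) (binPay K) S (φ ω) ∂(PrY 0 : Measure (ℕ → ℤ)) := by
    rw [valJ, ← key1, integral_map hφm.aemeasurable hsp_meas.aestronglyMeasurable]
  -- split the integral
  set Tm : Set (ℕ → ℤ) := {ω : ℕ → ℤ | ω 1 = -1} with hTmdef
  set Tp : Set (ℕ → ℤ) := {ω : ℕ → ℤ | ω 1 = 1} with hTpdef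
  have hTmm : MeasurableSet Tm := measurableSet_coordEq 1 (-1)
  have hTpm : MeasurableSet Tp := measurableSet_coordEq 1 1
  have hTmval : PrY 0 Tm = ENNReal.ofReal (1-p) := by
    have : Tm = {ω : ℕ → ℤ | ω 1 ∈ ({-1} : Set ℤ)} := by ext; simp [hTmdef]
    rw [this, walk_first hwalk, QY_apply hQY]
    norm_num
  have hTpval : PrY 0 Tp = ENNReal.ofReal p := by
    have : Tp = {ω : ℕ → ℤ | ω 1 ∈ ({1} : Set ℤ)} := by ext; simp [hTpdef]
    rw [this, walk_first hwalk, QY_apply hQY]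
    norm_num
  have hTboth : PrY 0 {ω : ℕ → ℤ | ω 1 ∈ ({1, -1} : Set ℤ)} = 1 := by
    rw [walk_first hwalk, QY_apply hQY]
    have h1 : (0:ℤ)+1 ∈ ({1, -1} : Set ℤ) := by norm_num
    have h2 : (0:ℤ)-1 ∈ ({1, -1} : Set ℤ) := by norm_num
    rw [if_pos h1, if_pos h2, ← ENNReal.ofReal_add (by linarith) (by linarith)]
    norm_num
  have hTcompl : (Tmᶜ : Set (ℕ → ℤ)) =ᵐ[(PrY 0 : Measure (ℕ → ℤ))] Tp := by
    refine ae_eq_set.mpr ?_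
    constructor
    · have hsub : Tmᶜ \ Tp ⊆ {ω : ℕ → ℤ | ω 1 ∈ ({1, -1} : Set ℤ)}ᶜ := by
        intro ω hω
        simp only [Set.mem_diff, Set.mem_compl_iff, hTmdef, hTpdef, Set.mem_setOf_eq] at hω ⊢
        simp only [Set.mem_insert_iff, Set.mem_singleton_iff, Set.mem_setOf_eq]
        tauto
      have h0 : PrY 0 ({ω : ℕ → ℤ | ω 1 ∈ ({1, -1} : Set ℤ)}ᶜ) = 0 :=
        (prob_compl_eq_zero_iff (measurableSet_coordMem 1 .of_discrete)).mpr hTboth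
      exact le_antisymm (le_trans (measure_mono hsub) (le_of_eq h0)) zero_le
    · have : Tp \ Tmᶜ = ∅ := by
        ext ω
        simp only [Set.mem_diff, Set.mem_compl_iff, hTmdef, hTpdef, Set.mem_setOf_eq,
          not_not, Set.mem_empty_iff_false, iff_false, not_and]
        intro h1 h2
        omega
      rw [this, measure_empty]
  -- compute the two pieces
  have hwdm : Measurable (walkDisc β 1) := measurable_walkDisc β 1
  have hpiece1 : ∫ ω in Tm, stopPayoff (binDisc β) (binPay K) S (φ ω)
      ∂(PrY 0 : Measure (ℕ → ℤ)) = (1-p) * ((K - y/u) / (1+β)) := by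
    rw [setIntegral_congr_ae hTmm (hGae.mono fun ω hωG hωT => hP1 ω hωG hωT)]
    rw [setIntegral_const, measureReal_def, hTmval, ENNReal.toReal_ofReal (by linarith), smul_eq_mul]
  have hpiece2 : ∫ ω in Tmᶜ, stopPayoff (binDisc β) (binPay K) S (φ ω)
      ∂(PrY 0 : Measure (ℕ → ℤ)) = (K - y) * (p * α') := by
    rw [setIntegral_congr_set hTcompl]
    rw [setIntegral_congr_ae hTpm (hGae.mono fun ω hωG hωT => hP2 ω hωG hωT)]
    have hshift : ∫ ω in Tp, (K - y) * walkDisc β 1 (shiftW ω) ∂(PrY 0 : Measure (ℕ → ℤ))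
        = (K - y) * ∫ ω in Tp, walkDisc β 1 (shiftW ω) ∂(PrY 0 : Measure (ℕ → ℤ)) :=
      integral_const_mul _ _
    rw [hshift]
    congr 1
    have : ∫ ω in Tp, walkDisc β 1 (shiftW ω) ∂(PrY 0 : Measure (ℕ → ℤ))
        = ∫ ω', walkDisc β 1 ω' ∂(((PrY 0 : Measure (ℕ → ℤ)).restrict Tp).map shiftW) := by
      rw [integral_map measurable_shiftW.aemeasurable hwdm.aestronglyMeasurable]
    rw [this, shift_law hwalk hQY hp0, integral_smul_measure,
      ENNReal.toReal_ofReal hp0.le, smul_eq_mul, hα', alphaWalk']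
  -- value formula
  have hvalue : valJ Pr (binDisc β) (binPay K) S y
      = (1-p) * ((K - y/u) / (1+β)) + (K - y) * (p * α') := by
    rw [hval, ← integral_add_compl hTmm hint, hpiece1, hpiece2]
  -- bounds on α'
  have hwd_bounds : ∀ ω : ℕ → ℤ, 0 ≤ walkDisc β 1 ω ∧ walkDisc β 1 ω ≤ 1/(1+β) := by
    intro ω
    rw [walkDisc]
    split_ifs with h
    · exact ⟨le_rfl, le_of_lt (div_pos one_pos hβ1)⟩
    · have h0 : (0:ℝ) ≤ ((walkHit ω).toNat : ℝ) := Nat.cast_nonneg _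
      have hden : (0:ℝ) < 1 + β * (((walkHit ω).toNat : ℝ) + 1) := by nlinarith
      have hle : (1:ℝ) + β ≤ 1 + β * (((walkHit ω).toNat : ℝ) + 1) := by nlinarith
      push_cast
      exact ⟨le_of_lt (div_pos one_pos hden), one_div_le_one_div_of_le hβ1 hle⟩
  have hwint : Integrable (walkDisc β 1) (PrY 1 : Measure (ℕ → ℤ)) :=
    Integrable.mono' (integrable_const (1/(1+β))) hwdm.aestronglyMeasurable
      (Filter.Eventually.of_forall fun ω => by
        rw [Real.norm_eq_abs, abs_of_nonneg (hwd_bounds ω).1]; exact (hwd_bounds ω).2)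
  have hα'0 : 0 ≤ α' := by
    rw [hα', alphaWalk']
    exact integral_nonneg fun ω => (hwd_bounds ω).1
  have hα'le : α' ≤ 1/(1+β) := by
    rw [hα', alphaWalk']
    calc ∫ ω, walkDisc β 1 ω ∂(PrY 1 : Measure (ℕ → ℤ))
        ≤ ∫ _, 1/(1+β) ∂(PrY 1 : Measure (ℕ → ℤ)) :=
          integral_mono hwint (integrable_const _) fun ω => (hwd_bounds ω).2
      _ = 1/(1+β) := by rw [integral_const, probReal_univ, one_smul]
  -- final algebra
  have hkey : (1-p) * ((K - y/u) / (1+β)) + (K - y) * (p * α') ≤ K - y := by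
    rw [← hvalue]; exact hJy
  have hD : 0 < 1 - (1 - p) / (u * (1 + β)) - p * α' := by
    have h1 : (1-p) / (u * (1+β)) < (1-p) / (1+β) := by
      apply div_lt_div_of_pos_left h1p hβ1
      nlinarith
    have h2 : p * α' ≤ p * (1/(1+β)) := by nlinarith
    have h3 : (1-p)/(1+β) + p/(1+β) = 1/(1+β) := by rw [← add_div, sub_add_cancel]
    have h4 : 1/(1+β) < 1 := by rw [div_lt_one hβ1]; linarith
    have h5 : p * (1/(1+β)) = p/(1+β) := by ring
    linarith
  rw [div_mul_eq_mul_div, le_div_iff₀ hD]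
  have hexpand : (1 - (1 - p) / (1 + β) - p * α') * K - (1 - (1 - p) / (u * (1 + β)) - p * α') * y
      = (K - y) - ((1-p) * ((K - y/u) / (1+β)) + (K - y) * (p * α')) := by
    field_simp
    ring
  nlinarith [hkey, hexpand]
end
end

section
/- In the binomial model, if S = (0,y] ∩ 𝕏 is an equilibrium for some y ∈ S ∩ (0,K), then y > L·K, where L := (1 − α₁)/(u − α₁) and α₁ := E^1[1/(1+βξ)], with ξ the first hitting time of 0 by the random walk Y on ℤ with i.i.d. steps +1 with probability p and −1 with probability 1−p, E^n expectation for Y_0 = n, and the convention 1/(1+β·∞) := 0. -/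
open MeasureTheory ProbabilityTheory Set Filter Topology
open scoped ENNReal ENat

noncomputable section

/-! ### Auxiliary lemmas -/

open scoped Classical

section Aux

lemma enat_sInf_eq (P : ℕ → Prop) :
    sInf {n : ℕ∞ | ∃ t : ℕ, n = (t : ℕ∞) ∧ P t}
      = if h : ∃ t, P t then ((Nat.find h : ℕ) : ℕ∞) else ⊤ := by
  split_ifs with h
  · refine le_antisymm (sInf_le ⟨Nat.find h, rfl, Nat.find_spec h⟩) (le_sInf ?_)
    rintro n ⟨t, rfl, ht⟩
    exact_mod_cast Nat.find_le ht
  · rw [show {n : ℕ∞ | ∃ t : ℕ, n = (t : ℕ∞) ∧ P t} = ∅ from ?_, sInf_empty]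
    ext n; simp only [Set.mem_setOf_eq, Set.mem_empty_iff_false, iff_false, not_exists]
    rintro t ⟨rfl, ht⟩; exact h ⟨t, ht⟩

lemma hitTime_eq_coe_iff {𝕏 : Type*} (S : Set 𝕏) (ω : ℕ → 𝕏) (t₀ : ℕ) :
    hitTime S ω = (t₀ : ℕ∞) ↔ (1 ≤ t₀ ∧ ω t₀ ∈ S) ∧ ∀ s < t₀, ¬(1 ≤ s ∧ ω s ∈ S) := by
  rw [hitTime, enat_sInf_eq]
  split_ifs with h
  · rw [Nat.cast_inj]
    exact @Nat.find_eq_iff t₀ _ (fun a => Classical.propDecidable _) h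
  · exact iff_of_false (by simp) (fun hc => h ⟨t₀, hc.1⟩)

lemma hitTime_eq_top_iff {𝕏 : Type*} (S : Set 𝕏) (ω : ℕ → 𝕏) :
    hitTime S ω = ⊤ ↔ ∀ t, 1 ≤ t → ω t ∉ S := by
  rw [hitTime, enat_sInf_eq]
  split_ifs with h
  · refine iff_of_false (by simp) ?_
    push_neg
    exact ⟨Nat.find h, (Nat.find_spec h).1, (Nat.find_spec h).2⟩
  · push_neg at h; simpa using fun t ht => (h t ht)

lemma walkHit_eq_coe_iff (ω : ℕ → ℤ) (t₀ : ℕ) :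
    walkHit ω = (t₀ : ℕ∞) ↔ ω t₀ = 0 ∧ ∀ s < t₀, ω s ≠ 0 := by
  rw [walkHit, enat_sInf_eq]
  split_ifs with h
  · rw [Nat.cast_inj]
    exact @Nat.find_eq_iff t₀ _ (fun a => Classical.propDecidable _) h
  · exact iff_of_false (by simp) (fun hc => h ⟨t₀, hc.1⟩)

lemma walkHit_eq_top_iff (ω : ℕ → ℤ) :
    walkHit ω = ⊤ ↔ ∀ t, ω t ≠ 0 := by
  rw [walkHit, enat_sInf_eq]
  split_ifs with h
  · exact iff_of_false (by simp) (fun hc => hc _ (Nat.find_spec h))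
  · push_neg at h; simpa using fun t => (h t)

section Meas

variable {𝕏 : Type*} [m𝕏 : MeasurableSpace 𝕏]

lemma measurableSet_hitTime_coe {S : Set 𝕏} (hS : MeasurableSet S) (t₀ : ℕ) :
    MeasurableSet {ω : ℕ → 𝕏 | hitTime S ω = (t₀ : ℕ∞)} := by
  have : {ω : ℕ → 𝕏 | hitTime S ω = (t₀ : ℕ∞)}
      = ({ω : ℕ → 𝕏 | 1 ≤ t₀} ∩ (fun ω : ℕ → 𝕏 => ω t₀) ⁻¹' S)
        ∩ ⋂ s ∈ Finset.range t₀, ({ω : ℕ → 𝕏 | 1 ≤ s} ∩ (fun ω : ℕ → 𝕏 => ω s) ⁻¹' S)ᶜ := by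
    ext ω
    simp only [hitTime_eq_coe_iff, Set.mem_setOf_eq, Set.mem_inter_iff, Set.mem_iInter,
      Finset.mem_range, Set.mem_compl_iff, Set.mem_preimage, not_and]
  rw [this]
  refine (((MeasurableSet.const _).inter (measurable_pi_apply t₀ hS)).inter ?_)
  exact MeasurableSet.biInter (Finset.range t₀).countable_toSet
    (fun s _ => ((MeasurableSet.const _).inter (measurable_pi_apply s hS)).compl)

lemma measurableSet_hitTime_top {S : Set 𝕏} (hS : MeasurableSet S) :
    MeasurableSet {ω : ℕ → 𝕏 | hitTime S ω = ⊤} := by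
  have : {ω : ℕ → 𝕏 | hitTime S ω = ⊤} = (⋃ t : ℕ, {ω : ℕ → 𝕏 | hitTime S ω = (t : ℕ∞)})ᶜ := by
    ext ω
    simp only [Set.mem_setOf_eq, Set.mem_compl_iff, Set.mem_iUnion, not_exists]
    constructor
    · rintro h t ht; rw [h] at ht; exact absurd ht (by simp)
    · intro h
      cases hc : hitTime S ω with
      | top => rfl
      | coe t => exact absurd hc (h t)
  rw [this]
  exact (MeasurableSet.iUnion (fun t => measurableSet_hitTime_coe hS t)).compl

lemma measurable_hitTime_toNat {S : Set 𝕏} (hS : MeasurableSet S) :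
    Measurable (fun ω : ℕ → 𝕏 => (hitTime S ω).toNat) := by
  apply measurable_to_countable'
  intro n
  rcases n with _ | m
  · have : (fun ω : ℕ → 𝕏 => (hitTime S ω).toNat) ⁻¹' {0}
        = {ω : ℕ → 𝕏 | hitTime S ω = (0 : ℕ∞)} ∪ {ω : ℕ → 𝕏 | hitTime S ω = ⊤} := by
      ext ω
      simp [ENat.toNat_eq_zero, Set.mem_preimage]
    rw [this]
    exact (measurableSet_hitTime_coe hS 0).union (measurableSet_hitTime_top hS)
  · have : (fun ω : ℕ → 𝕏 => (hitTime S ω).toNat) ⁻¹' {m + 1}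
        = {ω : ℕ → 𝕏 | hitTime S ω = ((m+1 : ℕ) : ℕ∞)} := by
      ext ω
      simp only [Set.mem_preimage, Set.mem_singleton_iff, Set.mem_setOf_eq]
      rw [ENat.toNat_eq_iff (by simp)]
    rw [this]
    exact measurableSet_hitTime_coe hS (m+1)

lemma measurable_stopPayoff (δ : ℕ → ℝ) {f : 𝕏 → ℝ} (hf : Measurable f)
    {S : Set 𝕏} (hS : MeasurableSet S) : Measurable (stopPayoff δ f S) := by
  unfold stopPayoff
  apply Measurable.ite (measurableSet_hitTime_top hS) measurable_const
  have hev : Measurable (fun q : (ℕ → 𝕏) × ℕ => q.1 q.2) :=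
    measurable_from_prod_countable_left (fun n => measurable_pi_apply n)
  have hN := measurable_hitTime_toNat hS
  exact (measurable_from_top.comp hN).mul
    (hf.comp (hev.comp (measurable_id.prodMk hN)))

end Meas

lemma measurableSet_walkHit_coe (t₀ : ℕ) :
    MeasurableSet {ω : ℕ → ℤ | walkHit ω = (t₀ : ℕ∞)} := by
  have : {ω : ℕ → ℤ | walkHit ω = (t₀ : ℕ∞)}
      = ((fun ω : ℕ → ℤ => ω t₀) ⁻¹' {0})
        ∩ ⋂ s ∈ Finset.range t₀, ((fun ω : ℕ → ℤ => ω s) ⁻¹' {0})ᶜ := by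
    ext ω
    simp only [walkHit_eq_coe_iff, Set.mem_setOf_eq, Set.mem_inter_iff, Set.mem_iInter,
      Finset.mem_range, Set.mem_compl_iff, Set.mem_preimage, Set.mem_singleton_iff]
  rw [this]
  refine (measurable_pi_apply t₀ (measurableSet_singleton 0)).inter ?_
  exact MeasurableSet.biInter (Finset.range t₀).countable_toSet
    (fun s _ => (measurable_pi_apply s (measurableSet_singleton 0)).compl)

lemma measurableSet_walkHit_top :
    MeasurableSet {ω : ℕ → ℤ | walkHit ω = ⊤} := by
  have : {ω : ℕ → ℤ | walkHit ω = ⊤} = (⋃ t : ℕ, {ω : ℕ → ℤ | walkHit ω = (t : ℕ∞)})ᶜ := by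
    ext ω
    simp only [Set.mem_setOf_eq, Set.mem_compl_iff, Set.mem_iUnion, not_exists]
    constructor
    · rintro h t ht; rw [h] at ht; exact absurd ht (by simp)
    · intro h
      cases hc : walkHit ω with
      | top => rfl
      | coe t => exact absurd hc (h t)
  rw [this]
  exact (MeasurableSet.iUnion (fun t => measurableSet_walkHit_coe t)).compl

lemma measurable_walkHit_toNat : Measurable (fun ω : ℕ → ℤ => (walkHit ω).toNat) := by
  apply measurable_to_countable'
  intro n
  rcases n with _ | m
  · have : (fun ω : ℕ → ℤ => (walkHit ω).toNat) ⁻¹' {0}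
        = {ω : ℕ → ℤ | walkHit ω = (0 : ℕ∞)} ∪ {ω : ℕ → ℤ | walkHit ω = ⊤} := by
      ext ω; simp [ENat.toNat_eq_zero, Set.mem_preimage]
    rw [this]
    exact (measurableSet_walkHit_coe 0).union measurableSet_walkHit_top
  · have : (fun ω : ℕ → ℤ => (walkHit ω).toNat) ⁻¹' {m + 1}
        = {ω : ℕ → ℤ | walkHit ω = ((m+1 : ℕ) : ℕ∞)} := by
      ext ω
      simp only [Set.mem_preimage, Set.mem_singleton_iff, Set.mem_setOf_eq]
      rw [ENat.toNat_eq_iff (by simp)]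
    rw [this]
    exact measurableSet_walkHit_coe (m+1)

lemma measurable_walkDisc (β : ℝ) (s : ℕ) : Measurable (walkDisc β s) := by
  unfold walkDisc
  apply Measurable.ite measurableSet_walkHit_top measurable_const
  exact (measurable_from_top (f := fun n : ℕ => 1 / (1 + β * ((n : ℝ) + s)))).comp
    measurable_walkHit_toNat

/-! ### Rectangles and the path σ-algebra -/

/-- A finite-dimensional rectangle in path space. -/
def rect {𝕏 : Type*} (n : ℕ) (A : ℕ → Set 𝕏) : Set (ℕ → 𝕏) := {ω | ∀ i < n, ω i ∈ A i}

section Rect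

variable {𝕏 : Type*} [m𝕏 : MeasurableSpace 𝕏]

omit m𝕏 in
lemma rect_eq_biInter (n : ℕ) (A : ℕ → Set 𝕏) :
    rect n A = ⋂ i ∈ Finset.range n, (fun ω : ℕ → 𝕏 => ω i) ⁻¹' A i := by
  ext ω; simp [rect]

lemma pathSigma_le_pi (n : ℕ) : pathSigma 𝕏 n ≤ MeasurableSpace.pi :=
  iSup₂_le fun i _ => measurable_iff_comap_le.mp (measurable_pi_apply i)

lemma comap_le_pathSigma {i n : ℕ} (hi : i < n + 1) :
    MeasurableSpace.comap (fun ω : ℕ → 𝕏 => ω i) m𝕏 ≤ pathSigma 𝕏 n :=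
  le_iSup₂ (f := fun i (_ : i ∈ Finset.range (n+1)) =>
    MeasurableSpace.comap (fun ω : ℕ → 𝕏 => ω i) m𝕏) i (Finset.mem_range.mpr hi)

lemma measurableSet_rect_pathSigma {n : ℕ} {A : ℕ → Set 𝕏} (hA : ∀ i, MeasurableSet (A i)) :
    MeasurableSet[pathSigma 𝕏 n] (rect (n + 1) A) := by
  rw [rect_eq_biInter]
  refine MeasurableSet.biInter (Finset.range (n+1)).countable_toSet (fun i hi => ?_)
  exact comap_le_pathSigma (Finset.mem_range.mp hi) _ ⟨A i, hA i, rfl⟩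

lemma measurableSet_rect {n : ℕ} {A : ℕ → Set 𝕏} (hA : ∀ i, MeasurableSet (A i)) :
    MeasurableSet (rect n A) := by
  rw [rect_eq_biInter]
  exact MeasurableSet.biInter (Finset.range n).countable_toSet
    (fun i _ => measurable_pi_apply i (hA i))

/-- The collection of all finite-dimensional measurable rectangles. -/
def cylRects (𝕏 : Type*) [MeasurableSpace 𝕏] : Set (Set (ℕ → 𝕏)) :=
  {R | ∃ n A, (∀ i, MeasurableSet (A i)) ∧ R = rect n A}

lemma isPiSystem_cylRects : IsPiSystem (cylRects 𝕏) := by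
  rintro R1 ⟨n1, A1, hA1, rfl⟩ R2 ⟨n2, A2, hA2, rfl⟩ -
  refine ⟨max n1 n2, fun i => (if i < n1 then A1 i else Set.univ)
      ∩ (if i < n2 then A2 i else Set.univ), fun i => ?_, ?_⟩
  · refine MeasurableSet.inter ?_ ?_ <;> split_ifs <;>
      first | exact hA1 _ | exact hA2 _ | exact MeasurableSet.univ
  · ext ω
    simp only [rect, Set.mem_inter_iff, Set.mem_setOf_eq]
    constructor
    · rintro ⟨h1, h2⟩ i hi
      constructor
      · split_ifs with hc
        · exact h1 i hc
        · exact Set.mem_univ _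
      · split_ifs with hc
        · exact h2 i hc
        · exact Set.mem_univ _
    · intro h
      refine ⟨fun i hi => ?_, fun i hi => ?_⟩
      · have := (h i (lt_max_of_lt_left hi)).1
        simpa [hi] using this
      · have := (h i (lt_max_of_lt_right hi)).2
        simpa [hi] using this

lemma pi_eq_generateFrom_cylRects :
    (MeasurableSpace.pi : MeasurableSpace (ℕ → 𝕏)) = .generateFrom (cylRects 𝕏) := by
  refine le_antisymm ?_ (MeasurableSpace.generateFrom_le ?_)
  · refine iSup_le fun i => ?_
    intro s hs
    obtain ⟨A, hA, rfl⟩ := hs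
    refine MeasurableSpace.measurableSet_generateFrom
      ⟨i + 1, fun j => if j = i then A else Set.univ,
        fun j => by dsimp only; split_ifs <;> simp [hA], ?_⟩
    ext ω
    simp only [Set.mem_preimage, rect, Set.mem_setOf_eq]
    constructor
    · intro h j hj
      split_ifs with hc
      · subst hc; exact h
      · exact Set.mem_univ _
    · intro h
      have := h i (Nat.lt_succ_self i)
      simpa using this
  · rintro R ⟨n, A, hA, rfl⟩
    exact measurableSet_rect hA

lemma measurable_pathSigma_comp {𝕐 : Type*} [m𝕐 : MeasurableSpace 𝕐]
    {ψ : 𝕐 → 𝕏} (hψ : Measurable ψ) (n : ℕ) :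
    @Measurable _ _ (pathSigma 𝕐 n) (pathSigma 𝕏 n) (fun ω i => ψ (ω i)) := by
  rw [measurable_iff_comap_le]
  unfold pathSigma
  rw [MeasurableSpace.comap_iSup]
  refine iSup_le fun i => ?_
  rw [MeasurableSpace.comap_iSup]
  refine iSup_le fun hi => ?_
  rw [MeasurableSpace.comap_comp]
  have heq : ((fun ω : ℕ → 𝕏 => ω i) ∘ fun ω j => ψ (ω j)) = ψ ∘ (fun ω : ℕ → 𝕐 => ω i) := rfl
  rw [heq, ← MeasurableSpace.comap_comp]
  calc MeasurableSpace.comap (fun ω : ℕ → 𝕐 => ω i) (MeasurableSpace.comap ψ m𝕏)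
      ≤ MeasurableSpace.comap (fun ω : ℕ → 𝕐 => ω i) m𝕐 :=
        MeasurableSpace.comap_mono (measurable_iff_comap_le.mp hψ)
    _ ≤ _ := le_iSup₂ (f := fun i (_ : i ∈ Finset.range (n+1)) =>
        MeasurableSpace.comap (fun ω : ℕ → 𝕐 => ω i) m𝕐) i hi

omit m𝕏 in
lemma rect_succ_eq (n : ℕ) (A : ℕ → Set 𝕏) :
    rect (n + 2) A = rect (n + 1) A ∩ {ω : ℕ → 𝕏 | ω (n + 1) ∈ A (n + 1)} := by
  ext ω
  simp only [rect, Set.mem_inter_iff, Set.mem_setOf_eq]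
  constructor
  · intro h
    exact ⟨fun i hi => h i (hi.trans (Nat.lt_succ_self _)), h (n+1) (Nat.lt_succ_self _)⟩
  · rintro ⟨h1, h2⟩ i hi
    rcases Nat.lt_succ_iff_lt_or_eq.mp hi with h | h
    · exact h1 i h
    · subst h; exact h2

omit m𝕏 in
lemma rect_inter_eval (n : ℕ) (A : ℕ → Set 𝕏) (C : Set 𝕏) (g : 𝕏 → 𝕏) :
    rect (n + 1) A ∩ {ω : ℕ → 𝕏 | g (ω n) ∈ C}
      = rect (n + 1) (fun i => if i = n then A n ∩ g ⁻¹' C else A i) := by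
  ext ω
  simp only [rect, Set.mem_inter_iff, Set.mem_setOf_eq]
  constructor
  · rintro ⟨h1, h2⟩ i hi
    split_ifs with hc
    · subst hc; exact ⟨h1 _ hi, h2⟩
    · exact h1 i hi
  · intro h
    refine ⟨fun i hi => ?_, ?_⟩
    · have := h i hi
      by_cases hc : i = n
      · subst hc
        rw [if_pos rfl] at this
        exact this.1
      · rwa [if_neg hc] at this
    · have := h n (Nat.lt_succ_self n)
      rw [if_pos rfl] at this
      exact this.2

end Rect

/-! ### Measure-theoretic helpers -/

lemma lint_mix {Ω : Type*} [MeasurableSpace Ω] (m : Measure Ω) {B : Set Ω}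
    (hB : MeasurableSet B) {C : Set ℝ} (hC : MeasurableSet C)
    {g h : Ω → ℝ} (hg : Measurable g) (hh : Measurable h) (a b : ℝ≥0∞) :
    ∫⁻ ω in B, (a * C.indicator 1 (g ω) + b * C.indicator 1 (h ω)) ∂m
      = a * m (B ∩ g ⁻¹' C) + b * m (B ∩ h ⁻¹' C) := by
  have e1 : ∀ ω, C.indicator (1 : ℝ → ℝ≥0∞) (g ω) = (g ⁻¹' C).indicator 1 ω := by
    intro ω; simp [Set.indicator_apply, Set.mem_preimage]
  have e2 : ∀ ω, C.indicator (1 : ℝ → ℝ≥0∞) (h ω) = (h ⁻¹' C).indicator 1 ω := by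
    intro ω; simp [Set.indicator_apply, Set.mem_preimage]
  simp_rw [e1, e2]
  rw [lintegral_add_left (((measurable_one.indicator (hg hC)).const_mul a))]
  rw [lintegral_const_mul _ (measurable_one.indicator (hg hC)),
    lintegral_const_mul _ (measurable_one.indicator (hh hC))]
  rw [setLIntegral_indicator (hg hC), setLIntegral_indicator (hh hC)]
  simp [setLIntegral_one, Set.inter_comm]

lemma measure_of_conull {Ω : Type*} [MeasurableSpace Ω] (m : Measure Ω)
    [IsProbabilityMeasure m] {F E : Set Ω} (hF : MeasurableSet F) (h1 : m F = 1)
    (P : Prop) (h : P → F ⊆ E) (h' : ¬P → E ∩ F = ∅) :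
    m E = if P then 1 else 0 := by
  have hc : m Fᶜ = 0 := by
    rw [measure_compl hF (measure_ne_top m F), h1, measure_univ]
    simp
  have hEF : m E = m (E ∩ F) := (measure_inter_conull hc).symm
  split_ifs with hp
  · refine le_antisymm prob_le_one ?_
    rw [← h1]
    exact measure_mono (h hp)
  · rw [hEF, h' hp, measure_empty]


/-! ### Comparison of the two chains -/

/-- The spatial embedding `ψ(m) = y uᵐ`. -/
def psiFun (u y : ℝ) (m : ℤ) : ℝ := y * u ^ m

/-- The pathwise embedding `Φ(ω)(t) = y u^{ω t}`. -/
def phiFun (u y : ℝ) (ω : ℕ → ℤ) : ℕ → ℝ := fun t => psiFun u y (ω t)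

lemma measurable_phiFun (u y : ℝ) : Measurable (phiFun u y) :=
  measurable_pi_lambda _ (fun t => measurable_from_top.comp (measurable_pi_apply t))

lemma chain_step (u p : ℝ)
    (Pr : Kernel ℝ (ℕ → ℝ)) (Q : Kernel ℝ ℝ)
    (hchain : IsMarkovChainLaw Pr Q)
    (hQ : ∀ x : ℝ, Q x = ENNReal.ofReal p • Measure.dirac (u * x)
      + ENNReal.ofReal (1 - p) • Measure.dirac (x / u))
    (x : ℝ) (n : ℕ) (B : Set (ℕ → ℝ)) (hB : MeasurableSet[pathSigma ℝ n] B)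
    (C : Set ℝ) (hC : MeasurableSet C) :
    Pr x (B ∩ {ω | ω (n+1) ∈ C})
      = ENNReal.ofReal p * Pr x (B ∩ {ω | u * ω n ∈ C})
        + ENNReal.ofReal (1-p) * Pr x (B ∩ {ω | ω n / u ∈ C}) := by
  rw [hchain.markov x n B hB C hC]
  have hint : ∀ ω : ℕ → ℝ, Q (ω n) C
      = ENNReal.ofReal p * C.indicator 1 (u * ω n)
        + ENNReal.ofReal (1-p) * C.indicator 1 (ω n / u) := by
    intro ω
    rw [hQ]
    simp [Measure.dirac_apply' _ hC]
  simp_rw [hint]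
  exact lint_mix (Pr x) (pathSigma_le_pi n B hB) hC
    ((measurable_pi_apply n).const_mul u) ((measurable_pi_apply n).div_const u) _ _

lemma map_step (u p y : ℝ) (hu : 0 < u)
    (PrY : Kernel ℤ (ℕ → ℤ)) (QY : Kernel ℤ ℤ)
    (hwalk : IsMarkovChainLaw PrY QY)
    (hQY : ∀ m : ℤ, QY m = ENNReal.ofReal p • Measure.dirac (m + 1)
      + ENNReal.ofReal (1 - p) • Measure.dirac (m - 1))
    (n : ℕ) (B : Set (ℕ → ℝ)) (hB : MeasurableSet[pathSigma ℝ n] B)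
    (C : Set ℝ) (hC : MeasurableSet C) :
    Measure.map (phiFun u y) (PrY 1) (B ∩ {ω | ω (n+1) ∈ C})
      = ENNReal.ofReal p * Measure.map (phiFun u y) (PrY 1) (B ∩ {ω | u * ω n ∈ C})
        + ENNReal.ofReal (1-p) * Measure.map (phiFun u y) (PrY 1) (B ∩ {ω | ω n / u ∈ C}) := by
  have hΦ : Measurable (phiFun u y) := measurable_phiFun u y
  have hB' : MeasurableSet B := pathSigma_le_pi n B hB
  have hg1 : Measurable (fun ω : ℕ → ℝ => u * ω n) := by fun_prop
  have hg2 : Measurable (fun ω : ℕ → ℝ => ω n / u) := by fun_prop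
  have hCn1 : MeasurableSet {ω : ℕ → ℝ | ω (n+1) ∈ C} := measurable_pi_apply (n+1) hC
  have hCn2 : MeasurableSet {ω : ℕ → ℝ | u * ω n ∈ C} := hg1 hC
  have hCn3 : MeasurableSet {ω : ℕ → ℝ | ω n / u ∈ C} := hg2 hC
  rw [Measure.map_apply hΦ (hB'.inter hCn1), Measure.map_apply hΦ (hB'.inter hCn2),
      Measure.map_apply hΦ (hB'.inter hCn3)]
  have hpre : (phiFun u y) ⁻¹' (B ∩ {ω | ω (n+1) ∈ C})
      = ((phiFun u y) ⁻¹' B) ∩ {ω : ℕ → ℤ | ω (n+1) ∈ (psiFun u y) ⁻¹' C} := rfl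
  rw [hpre]
  have hpathB : MeasurableSet[pathSigma ℤ n] ((phiFun u y) ⁻¹' B) :=
    (measurable_pathSigma_comp (measurable_from_top (f := psiFun u y)) n) hB
  rw [hwalk.markov 1 n ((phiFun u y) ⁻¹' B) hpathB ((psiFun u y) ⁻¹' C)
    MeasurableSpace.measurableSet_top]
  have hφval : ∀ m : ℤ, (QY m) ((psiFun u y) ⁻¹' C)
      = ENNReal.ofReal p * C.indicator 1 (u * psiFun u y m)
        + ENNReal.ofReal (1-p) * C.indicator 1 (psiFun u y m / u) := by
    intro m
    have h1 : psiFun u y (m + 1) = u * psiFun u y m := by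
      unfold psiFun; rw [zpow_add_one₀ (ne_of_gt hu)]; ring
    have h2 : psiFun u y (m - 1) = psiFun u y m / u := by
      unfold psiFun; rw [zpow_sub_one₀ (ne_of_gt hu)]; field_simp
    have e1 : ((psiFun u y) ⁻¹' C).indicator (1 : ℤ → ℝ≥0∞) (m + 1)
        = C.indicator 1 (u * psiFun u y m) := by
      rw [← h1]; simp [Set.indicator_apply, Set.mem_preimage]
    have e2 : ((psiFun u y) ⁻¹' C).indicator (1 : ℤ → ℝ≥0∞) (m - 1)
        = C.indicator 1 (psiFun u y m / u) := by
      rw [← h2]; simp [Set.indicator_apply, Set.mem_preimage]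
    rw [hQY]
    simp only [Measure.coe_add, Measure.coe_smul, Pi.add_apply, Pi.smul_apply, smul_eq_mul,
      Measure.dirac_apply' _ (MeasurableSpace.measurableSet_top (s := (psiFun u y) ⁻¹' C))]
    rw [e1, e2]
  simp_rw [hφval]
  have hgm : Measurable (fun ω : ℕ → ℤ => u * psiFun u y (ω n)) :=
    (measurable_from_top (f := fun m : ℤ => u * psiFun u y m)).comp (measurable_pi_apply n)
  have hhm : Measurable (fun ω : ℕ → ℤ => psiFun u y (ω n) / u) :=
    (measurable_from_top (f := fun m : ℤ => psiFun u y m / u)).comp (measurable_pi_apply n)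
  rw [lint_mix (PrY 1) (hΦ hB') hC hgm hhm _ _]
  rfl

lemma chain_eq_map (u p y : ℝ) (hu : 0 < u)
    (Pr : Kernel ℝ (ℕ → ℝ)) [IsMarkovKernel Pr] (Q : Kernel ℝ ℝ)
    (hchain : IsMarkovChainLaw Pr Q)
    (hQ : ∀ x : ℝ, Q x = ENNReal.ofReal p • Measure.dirac (u * x)
      + ENNReal.ofReal (1 - p) • Measure.dirac (x / u))
    (PrY : Kernel ℤ (ℕ → ℤ)) [IsMarkovKernel PrY] (QY : Kernel ℤ ℤ)
    (hwalk : IsMarkovChainLaw PrY QY)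
    (hQY : ∀ m : ℤ, QY m = ENNReal.ofReal p • Measure.dirac (m + 1)
      + ENNReal.ofReal (1 - p) • Measure.dirac (m - 1)) :
    (Pr (u * y) : Measure (ℕ → ℝ)) = Measure.map (phiFun u y) (PrY 1) := by
  have hΦ : Measurable (phiFun u y) := measurable_phiFun u y
  have hprob : IsProbabilityMeasure (Measure.map (phiFun u y) (PrY 1)) :=
    Measure.isProbabilityMeasure_map hΦ.aemeasurable
  have hψ1 : psiFun u y 1 = u * y := by unfold psiFun; rw [zpow_one]; ring
  refine ext_of_generate_finite (cylRects ℝ) pi_eq_generateFrom_cylRects isPiSystem_cylRects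
    ?_ (by simp)
  rintro R ⟨n, A, hA, rfl⟩
  induction n generalizing A with
  | zero =>
    have : rect 0 A = Set.univ := by ext ω; simp [rect]
    rw [this]
    simp
  | succ n ih =>
    cases n with
    | zero =>
      have hrect : MeasurableSet (rect 1 A) := measurableSet_rect hA
      have h1 : Pr (u*y) (rect 1 A) = if u*y ∈ A 0 then 1 else 0 := by
        have hFm : MeasurableSet {ω : ℕ → ℝ | ω 0 = u*y} :=
          by
            rw [show {ω : ℕ → ℝ | ω 0 = u*y} = (fun ω : ℕ → ℝ => ω 0) ⁻¹' {u*y} from rfl]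
            exact measurable_pi_apply 0 (measurableSet_singleton _)
        refine measure_of_conull (Pr (u*y)) (F := {ω : ℕ → ℝ | ω 0 = u*y})
          hFm (hchain.start (u*y)) (u*y ∈ A 0) ?_ ?_
        · intro hp ω hω i hi
          have : i = 0 := Nat.lt_one_iff.mp hi
          subst this
          rw [show ω 0 = u*y from hω]
          exact hp
        · intro hp
          ext ω
          simp only [Set.mem_inter_iff, Set.mem_empty_iff_false, iff_false, not_and]
          intro hE hF
          apply hp
          have h0 := hE 0 Nat.one_pos
          rwa [show ω 0 = u*y from hF] at h0
      have h2 : Measure.map (phiFun u y) (PrY 1) (rect 1 A) = if u*y ∈ A 0 then 1 else 0 := by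
        rw [Measure.map_apply hΦ hrect]
        have hFm : MeasurableSet {ω : ℕ → ℤ | ω 0 = 1} :=
          by
            rw [show {ω : ℕ → ℤ | ω 0 = 1} = (fun ω : ℕ → ℤ => ω 0) ⁻¹' {1} from rfl]
            exact measurable_pi_apply 0 (measurableSet_singleton _)
        refine measure_of_conull (PrY 1) (F := {ω : ℕ → ℤ | ω 0 = 1})
          hFm (hwalk.start 1) (u*y ∈ A 0) ?_ ?_
        · intro hp ω hω i hi
          have : i = 0 := Nat.lt_one_iff.mp hi
          subst this
          show psiFun u y (ω 0) ∈ A 0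
          rw [show ω 0 = 1 from hω, hψ1]
          exact hp
        · intro hp
          ext ω
          simp only [Set.mem_inter_iff, Set.mem_empty_iff_false, iff_false, not_and]
          intro hE hF
          apply hp
          have h0 : psiFun u y (ω 0) ∈ A 0 := hE 0 Nat.one_pos
          rwa [show ω 0 = 1 from hF, hψ1] at h0
      rw [h1, h2]
    | succ k =>
      have hBmeas : MeasurableSet[pathSigma ℝ k] (rect (k+1) A) :=
        measurableSet_rect_pathSigma hA
      have hmul : rect (k+1) A ∩ {ω : ℕ → ℝ | u * ω k ∈ A (k+1)}
          = rect (k+1) (fun i => if i = k then A k ∩ (fun z : ℝ => u * z) ⁻¹' A (k+1) else A i) :=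
        rect_inter_eval k A (A (k+1)) (fun z : ℝ => u * z)
      have hdiv : rect (k+1) A ∩ {ω : ℕ → ℝ | ω k / u ∈ A (k+1)}
          = rect (k+1) (fun i => if i = k then A k ∩ (fun z : ℝ => z / u) ⁻¹' A (k+1) else A i) :=
        rect_inter_eval k A (A (k+1)) (fun z : ℝ => z / u)
      have hAmul : ∀ i, MeasurableSet
          ((fun i => if i = k then A k ∩ (fun z : ℝ => u * z) ⁻¹' A (k+1) else A i) i) := by
        intro i
        dsimp only
        split_ifs
        · exact (hA k).inter ((measurable_id.const_mul u) (hA (k+1)))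
        · exact hA i
      have hAdiv : ∀ i, MeasurableSet
          ((fun i => if i = k then A k ∩ (fun z : ℝ => z / u) ⁻¹' A (k+1) else A i) i) := by
        intro i
        dsimp only
        split_ifs
        · exact (hA k).inter ((measurable_id.div_const u) (hA (k+1)))
        · exact hA i
      rw [rect_succ_eq k A,
        chain_step u p Pr Q hchain hQ (u*y) k (rect (k+1) A) hBmeas (A (k+1)) (hA (k+1)),
        map_step u p y hu PrY QY hwalk hQY k (rect (k+1) A) hBmeas (A (k+1)) (hA (k+1)),
        hmul, hdiv, ih _ hAmul, ih _ hAdiv]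


/-! ### Almost sure path properties of the walk -/

lemma walk_ae (p : ℝ) (PrY : Kernel ℤ (ℕ → ℤ)) [IsMarkovKernel PrY] (QY : Kernel ℤ ℤ)
    (hwalk : IsMarkovChainLaw PrY QY)
    (hQY : ∀ m : ℤ, QY m = ENNReal.ofReal p • Measure.dirac (m + 1)
      + ENNReal.ofReal (1 - p) • Measure.dirac (m - 1)) :
    ∀ᵐ ω ∂(PrY 1 : Measure (ℕ → ℤ)),
      ω 0 = 1 ∧ ∀ t, ω (t+1) = ω t + 1 ∨ ω (t+1) = ω t - 1 := by
  have hFm : MeasurableSet {ω : ℕ → ℤ | ω 0 = 1} := by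
    rw [show {ω : ℕ → ℤ | ω 0 = 1} = (fun ω : ℕ → ℤ => ω 0) ⁻¹' {1} from rfl]
    exact measurable_pi_apply 0 (measurableSet_singleton _)
  have h0 : ∀ᵐ ω ∂(PrY 1 : Measure (ℕ → ℤ)), ω 0 = 1 := by
    rw [ae_iff]
    have : {ω : ℕ → ℤ | ¬ ω 0 = 1} = {ω : ℕ → ℤ | ω 0 = 1}ᶜ := rfl
    rw [this, measure_compl hFm (measure_ne_top _ _), hwalk.start 1, measure_univ]
    simp
  have hstep : ∀ t : ℕ, ∀ᵐ ω ∂(PrY 1 : Measure (ℕ → ℤ)),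
      ω (t+1) = ω t + 1 ∨ ω (t+1) = ω t - 1 := by
    intro t
    rw [ae_iff]
    refine measure_mono_null (t := ⋃ m : ℤ, ({ω : ℕ → ℤ | ω t = m}
      ∩ {ω : ℕ → ℤ | ω (t+1) ∈ ({m + 1, m - 1} : Set ℤ)ᶜ})) ?_ (measure_iUnion_null fun m => ?_)
    · intro ω hω
      simp only [Set.mem_setOf_eq, not_or] at hω
      refine Set.mem_iUnion.mpr ⟨ω t, ⟨rfl, ?_⟩⟩
      simp only [Set.mem_setOf_eq, Set.mem_compl_iff, Set.mem_insert_iff,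
        Set.mem_singleton_iff, not_or]
      exact hω
    · have hBpath : MeasurableSet[pathSigma ℤ t] {ω : ℕ → ℤ | ω t = m} :=
        comap_le_pathSigma (Nat.lt_succ_self t) _ ⟨{m}, MeasurableSpace.measurableSet_top, rfl⟩
      rw [hwalk.markov 1 t {ω : ℕ → ℤ | ω t = m} hBpath (({m + 1, m - 1} : Set ℤ)ᶜ)
        MeasurableSpace.measurableSet_top]
      have hBm : MeasurableSet {ω : ℕ → ℤ | ω t = m} := pathSigma_le_pi t _ hBpath
      rw [setLIntegral_congr_fun hBm (fun ω hω => ?_), lintegral_zero]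
      have hωt : ω t = m := hω
      rw [hωt, hQY m]
      simp only [Measure.coe_add, Measure.coe_smul, Pi.add_apply, Pi.smul_apply, smul_eq_mul,
        Measure.dirac_apply' _ (MeasurableSpace.measurableSet_top
          (s := (({m + 1, m - 1} : Set ℤ)ᶜ)))]
      simp [Set.indicator_apply]
  exact h0.and (ae_all_iff.mpr hstep)

lemma walk_path_zero {ω : ℕ → ℤ} (h0 : ω 0 = 1)
    (hstep : ∀ t, ω (t+1) = ω t + 1 ∨ ω (t+1) = ω t - 1) :
    ∀ t, ω t ≤ 0 → ∃ s, s ≤ t ∧ ω s = 0 := by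
  intro t
  induction t with
  | zero => intro h; rw [h0] at h; omega
  | succ k ih =>
    intro h
    by_cases hz : ω (k+1) = 0
    · exact ⟨k+1, le_refl _, hz⟩
    · have hk : ω k ≤ 0 := by rcases hstep k with h' | h' <;> omega
      obtain ⟨s, hs, hzero⟩ := ih hk
      exact ⟨s, hs.trans (Nat.le_succ k), hzero⟩

lemma hitTime_eq_walkHit {S : Set ℝ} {u y : ℝ} {ω : ℕ → ℤ} (h0 : ω 0 = 1)
    (hstep : ∀ t, ω (t+1) = ω t + 1 ∨ ω (t+1) = ω t - 1)
    (hmem : ∀ t : ℕ, (phiFun u y ω t ∈ S) ↔ ω t ≤ 0) :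
    hitTime S (phiFun u y ω) = walkHit ω := by
  by_cases h : ∃ t : ℕ, ω t = 0
  · have hT0 : ω (Nat.find h) = 0 := Nat.find_spec h
    have hTmin : ∀ s < Nat.find h, ω s ≠ 0 := fun s hs => Nat.find_min h hs
    have hw : walkHit ω = ((Nat.find h : ℕ) : ℕ∞) :=
      (walkHit_eq_coe_iff ω _).mpr ⟨hT0, hTmin⟩
    have hT1 : 1 ≤ Nat.find h := by
      by_contra hc
      push_neg at hc
      rw [Nat.lt_one_iff] at hc
      rw [hc, h0] at hT0
      omega
    have hh : hitTime S (phiFun u y ω) = ((Nat.find h : ℕ) : ℕ∞) := by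
      refine (hitTime_eq_coe_iff _ _ _).mpr ⟨⟨hT1, (hmem _).mpr (le_of_eq hT0)⟩, ?_⟩
      rintro s hs ⟨hs1, hmemS⟩
      obtain ⟨r, hr, hzero⟩ := walk_path_zero h0 hstep s ((hmem s).mp hmemS)
      exact hTmin r (lt_of_le_of_lt hr hs) hzero
    rw [hh, hw]
  · push_neg at h
    have hw : walkHit ω = ⊤ := (walkHit_eq_top_iff ω).mpr h
    have hh : hitTime S (phiFun u y ω) = ⊤ := by
      refine (hitTime_eq_top_iff _ _).mpr (fun t ht hmemS => ?_)
      obtain ⟨r, hr, hzero⟩ := walk_path_zero h0 hstep t ((hmem t).mp hmemS)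
      exact h r hzero
    rw [hh, hw]

end Aux

/-- In the binomial model, if `S = (0,y] ∩ 𝕏` is an equilibrium with `y ∈ S ∩ (0,K)`,
then `y > L·K` with `L = (1 − α₁) / (u − α₁)`. -/
theorem binomial_equilibrium_lower_bound
    (u p β K : ℝ) (hu : 1 < u) (hp_lb : 1 / (u + 1) ≤ p) (hp_ub : p < 1)
    (hβ : 0 < β) (hK : 0 < K)
    (Pr : Kernel ℝ (ℕ → ℝ)) [IsMarkovKernel Pr] (Q : Kernel ℝ ℝ) [IsMarkovKernel Q]
    (hchain : IsMarkovChainLaw Pr Q)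
    (hQ : ∀ x : ℝ, Q x = ENNReal.ofReal p • Measure.dirac (u * x)
      + ENNReal.ofReal (1 - p) • Measure.dirac (x / u))
    (PrY : Kernel ℤ (ℕ → ℤ)) [IsMarkovKernel PrY] (QY : Kernel ℤ ℤ) [IsMarkovKernel QY]
    (hwalk : IsMarkovChainLaw PrY QY)
    (hQY : ∀ n : ℤ, QY n = ENNReal.ofReal p • Measure.dirac (n + 1)
      + ENNReal.ofReal (1 - p) • Measure.dirac (n - 1))
    (y : ℝ) (hy_mem : y ∈ binGrid u) (hy_pos : 0 < y) (hyK : y < K)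
    (hS : ΘBin Pr u β K (Set.Ioc 0 y ∩ binGrid u) = Set.Ioc 0 y ∩ binGrid u) :
    ((1 - alphaWalk PrY β 1) / (u - alphaWalk PrY β 1)) * K < y := by
  have hupos : 0 < u := lt_trans zero_lt_one hu
  have hune : u ≠ 0 := ne_of_gt hupos
  set S : Set ℝ := Set.Ioc 0 y ∩ binGrid u with hSdef
  -- measurability of S
  have hgrid_meas : MeasurableSet (binGrid u) := by
    have : binGrid u = Set.range (fun i : ℤ => u ^ i) := by
      ext x; simp [binGrid, Set.mem_range, eq_comm]
    rw [this]
    exact (Set.countable_range _).measurableSet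
  have hSmeas : MeasurableSet S := measurableSet_Ioc.inter hgrid_meas
  obtain ⟨j, hj⟩ := hy_mem
  -- membership criterion
  have hmem : ∀ m : ℤ, (psiFun u y m ∈ S ↔ m ≤ 0) := by
    intro m
    have hzp : 0 < u ^ m := zpow_pos hupos m
    have hle1 : u ^ m ≤ 1 ↔ m ≤ 0 := by
      have := zpow_le_zpow_iff_right₀ (a := u) (m := m) (n := 0) hu
      simpa using this
    constructor
    · rintro ⟨⟨hpos, hle⟩, -⟩
      have : u ^ m ≤ 1 := by
        have := (mul_le_mul_iff_right₀ hy_pos).mp (by simpa [psiFun] using hle : y * u ^ m ≤ y * 1)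
        exact this
      exact hle1.mp this
    · intro hm
      refine ⟨⟨show (0:ℝ) < y * u ^ m from mul_pos hy_pos hzp, ?_⟩, ⟨j + m, ?_⟩⟩
      · have : y * u ^ m ≤ y * 1 := mul_le_mul_of_nonneg_left (hle1.mpr hm) (le_of_lt hy_pos)
        simpa [psiFun] using this
      · show y * u ^ m = u ^ (j + m)
        rw [hj, ← zpow_add₀ hune]
  -- the pushforward identity
  have hmap := chain_eq_map u p y hupos Pr Q hchain hQ PrY QY hwalk hQY
  -- pointwise payoff identity on good paths
  have hpointwise : ∀ ω : ℕ → ℤ,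
      (ω 0 = 1 ∧ ∀ t, ω (t+1) = ω t + 1 ∨ ω (t+1) = ω t - 1) →
      stopPayoff (binDisc β) (binPay K) S (phiFun u y ω) = (K - y) * walkDisc β 0 ω := by
    rintro ω ⟨h0, hstep⟩
    have hEq := hitTime_eq_walkHit (S := S) h0 hstep (fun t => hmem (ω t))
    cases hwc : walkHit ω with
    | top =>
      unfold stopPayoff walkDisc
      rw [hEq, hwc]
      simp
    | coe T =>
      have hT0 : ω T = 0 := ((walkHit_eq_coe_iff ω T).mp hwc).1
      have hne : ((T : ℕ∞)) ≠ ⊤ := by simp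
      unfold stopPayoff walkDisc
      rw [hEq, hwc, if_neg hne, if_neg hne]
      have htn : ((T : ℕ∞)).toNat = T := by simp
      rw [htn]
      have hφT : phiFun u y ω T = y := by
        show psiFun u y (ω T) = y
        rw [hT0]
        unfold psiFun
        simp
      rw [hφT]
      have hpay : binPay K y = K - y := max_eq_left (by linarith)
      rw [hpay]
      unfold binDisc
      push_cast
      ring
  -- the value of J at u*y
  have hae := walk_ae p PrY QY hwalk hQY
  have hpaym : Measurable (binPay K) :=
    ((continuous_const.sub continuous_id).max continuous_const).measurable
  have hJ : valJ Pr (binDisc β) (binPay K) S (u * y) = (K - y) * alphaWalk PrY β 1 := by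
    unfold valJ
    rw [hmap]
    rw [integral_map (measurable_phiFun u y).aemeasurable
      (measurable_stopPayoff (binDisc β) hpaym hSmeas).aestronglyMeasurable]
    rw [integral_congr_ae (hae.mono fun ω hω => hpointwise ω hω)]
    rw [integral_const_mul]
    rfl
  -- bounds on alpha
  have hwd_nonneg : ∀ ω : ℕ → ℤ, 0 ≤ walkDisc β 0 ω := by
    intro ω
    unfold walkDisc
    split_ifs
    · exact le_refl 0
    · have h1 : (0:ℝ) ≤ ((walkHit ω).toNat : ℝ) := Nat.cast_nonneg _
      have h2 : (0:ℝ) < 1 + β * (((walkHit ω).toNat : ℝ) + (0:ℕ)) := by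
        have : 0 ≤ β * (((walkHit ω).toNat : ℝ) + (0:ℕ)) := by
          apply mul_nonneg (le_of_lt hβ)
          push_cast
          linarith
        linarith
      positivity
  have hwd_le_one : ∀ ω : ℕ → ℤ, walkDisc β 0 ω ≤ 1 := by
    intro ω
    unfold walkDisc
    split_ifs
    · linarith
    · have h1 : (0:ℝ) ≤ ((walkHit ω).toNat : ℝ) := Nat.cast_nonneg _
      rw [div_le_one (by nlinarith)]
      nlinarith
  have hInt : Integrable (walkDisc β 0) (PrY 1 : Measure (ℕ → ℤ)) := by
    refine (integrable_const (1:ℝ)).mono' (measurable_walkDisc β 0).aestronglyMeasurable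
      (ae_of_all _ fun ω => ?_)
    rw [Real.norm_eq_abs, abs_of_nonneg (hwd_nonneg ω)]
    exact hwd_le_one ω
  have hα0 : 0 ≤ alphaWalk PrY β 1 := integral_nonneg hwd_nonneg
  have hα1 : alphaWalk PrY β 1 ≤ 1 := by
    have := integral_mono hInt (integrable_const (1:ℝ)) hwd_le_one
    simpa [alphaWalk] using this
  -- u*y is in the grid but not in S
  have hugrid : u * y ∈ binGrid u := by
    refine ⟨j + 1, ?_⟩
    rw [hj, zpow_add_one₀ hune]
    ring
  have hnotS : u * y ∉ S := by
    rintro ⟨⟨-, hle⟩, -⟩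
    nlinarith
  have hnotΘ : u * y ∉ ΘBin Pr u β K S := by
    rw [hSdef] at *
    rw [hS]
    exact hnotS
  have hlt : binPay K (u * y) < valJ Pr (binDisc β) (binPay K) S (u * y) := by
    by_contra hc
    push_neg at hc
    exact hnotΘ ⟨hugrid, hc⟩
  rw [hJ] at hlt
  have hKle : K - u * y ≤ binPay K (u * y) := le_max_left _ _
  have huα : 0 < u - alphaWalk PrY β 1 := by linarith
  rw [div_mul_eq_mul_div, div_lt_iff₀ huα]
  nlinarith

end
end
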